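/- arXiv:math/9707208 — 4 statements merged into one kernel-verified Lean document; each statement's English description precedes it below -/
import Mathlib

section
/- Let X be a first countable compact Hausdorff topological space with at least three points, let φ : C(X,ℂ) → C(X,ℂ) be a diameter preserving linear bijection, and let G' be the bijection of the collection of two-element subsets of X determined by G({x,y}) = {G'({x,y})}. Then for two-element subsets {x₁,y₁} and {x₂,y₂} of X, one has {x₁,y₁} ∩ {x₂,y₂} = ∅ if and only if G'({x₁,y₁}) ∩ G'({x₂,y₂}) = ∅. -/
/-- `S(f)`: the set of two-element subsets `{x,y}` of `X` with
`|f(x) - f(y)| = diam(f(X))`. -/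
def diamSet {X : Type*} [TopologicalSpace X] (f : C(X, ℂ)) : Set (Set X) :=
  {s | ∃ x y : X, x ≠ y ∧ s = {x, y} ∧
    ‖f x - f y‖ = Metric.diam (Set.range ⇑f)}

/-- `T(f)`: the set of triples `(x,y,u)` with `|f(x) - f(y)| = diam(f(X))` and
`u = f(x) - f(y)`. -/
def diamTriple {X : Type*} [TopologicalSpace X] (f : C(X, ℂ)) : Set (X × X × ℂ) :=
  {p | ‖f p.1 - f p.2.1‖ = Metric.diam (Set.range ⇑f) ∧
    p.2.2 = f p.1 - f p.2.1}

/-- `G(s) = ⋂ { S(φ(f)) : f ∈ C(X,ℂ), s ∈ S(f) }`. -/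
def Gset {X : Type*} [TopologicalSpace X] (φ : C(X, ℂ) → C(X, ℂ)) (s : Set X) :
    Set (Set X) :=
  {t | ∀ f : C(X, ℂ), s ∈ diamSet f → t ∈ diamSet (φ f)}

/-- `H(x,y,u) = ⋂ { T(φ(f)) : f ∈ C(X,ℂ), (x,y,u) ∈ T(f) }`. -/
def Hset {X : Type*} [TopologicalSpace X] (φ : C(X, ℂ) → C(X, ℂ)) (x y : X) (u : ℂ) :
    Set (X × X × ℂ) :=
  {p | ∀ f : C(X, ℂ), (x, y, u) ∈ diamTriple f → p ∈ diamTriple (φ f)}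

/-- `φ` is diameter preserving: `diam(φ(f)(X)) = diam(f(X))` for all `f`. -/
def DiamPreserving {X : Type*} [TopologicalSpace X] (φ : C(X, ℂ) → C(X, ℂ)) : Prop :=
  ∀ f : C(X, ℂ), Metric.diam (Set.range ⇑(φ f)) = Metric.diam (Set.range ⇑f)

/-- The collection of two-element subsets of `X`. -/
abbrev TwoSet (X : Type*) := {s : Set X // ∃ a b : X, a ≠ b ∧ s = {a, b}}

open Set Metric Complex

namespace GmapAux

variable {X : Type*} [TopologicalSpace X]

lemma abs_sub_le_diam [CompactSpace X] (f : C(X, ℂ)) (w w' : X) :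
    ‖f w - f w'‖ ≤ Metric.diam (Set.range ⇑f) := by
  rw [← Complex.dist_eq]
  exact Metric.dist_le_diam_of_mem ((isCompact_range f.continuous).isBounded)
    (mem_range_self w) (mem_range_self w')

lemma diam_le (f : C(X, ℂ)) {d : ℝ} (hd : 0 ≤ d)
    (h : ∀ w w', ‖f w - f w'‖ ≤ d) : Metric.diam (Set.range ⇑f) ≤ d := by
  apply Metric.diam_le_of_forall_dist_le hd
  rintro _ ⟨w, rfl⟩ _ ⟨w', rfl⟩
  rw [Complex.dist_eq]; exact h w w'

lemma diam_add_le [CompactSpace X] (f g : C(X, ℂ)) :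
    Metric.diam (Set.range ⇑(f + g)) ≤
      Metric.diam (Set.range ⇑f) + Metric.diam (Set.range ⇑g) := by
  apply diam_le _ (add_nonneg Metric.diam_nonneg Metric.diam_nonneg)
  intro w w'
  have h : (f + g) w - (f + g) w' = (f w - f w') + (g w - g w') := by
    simp [ContinuousMap.add_apply]; ring
  rw [h]
  exact le_trans (norm_add_le _ _)
    (add_le_add (abs_sub_le_diam f w w') (abs_sub_le_diam g w w'))

lemma diam_smul_le [CompactSpace X] (f : C(X, ℂ)) {c : ℂ} (hc : ‖c‖ ≤ 1) :
    Metric.diam (Set.range ⇑(c • f)) ≤ Metric.diam (Set.range ⇑f) := by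
  apply diam_le _ Metric.diam_nonneg
  intro w w'
  have h : (c • f) w - (c • f) w' = c * (f w - f w') := by
    simp [ContinuousMap.smul_apply]; ring
  rw [h, norm_mul]
  calc ‖c‖ * ‖f w - f w'‖
      ≤ 1 * ‖f w - f w'‖ := by
        exact mul_le_mul_of_nonneg_right hc (norm_nonneg _)
    _ = ‖f w - f w'‖ := one_mul _
    _ ≤ _ := abs_sub_le_diam f w w'

lemma diam_smul [CompactSpace X] (f : C(X, ℂ)) {c : ℂ} (hc : ‖c‖ = 1) :
    Metric.diam (Set.range ⇑(c • f)) = Metric.diam (Set.range ⇑f) := by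
  have hc0 : c ≠ 0 := by
    intro h; rw [h] at hc; simp at hc
  refine le_antisymm (diam_smul_le f hc.le) ?_
  have h2 := diam_smul_le (c • f) (c := c⁻¹) (by rw [norm_inv, hc]; norm_num)
  rwa [smul_smul, inv_mul_cancel₀ hc0, one_smul] at h2

lemma exists_attain [CompactSpace X] [Nonempty X] (f : C(X, ℂ)) :
    ∃ w w' : X, ‖f w - f w'‖ = Metric.diam (Set.range ⇑f) := by
  have hcont : Continuous fun p : X × X => ‖f p.1 - f p.2‖ :=
    continuous_norm.comp
      ((f.continuous.comp continuous_fst).sub (f.continuous.comp continuous_snd))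
  obtain ⟨⟨w, w'⟩, -, hmax⟩ :=
    (isCompact_univ : IsCompact (univ : Set (X × X))).exists_isMaxOn univ_nonempty
      hcont.continuousOn
  refine ⟨w, w', le_antisymm ?_ ?_⟩
  · exact abs_sub_le_diam f w w'
  · apply diam_le _ (norm_nonneg _)
    intro v v'
    exact isMaxOn_iff.mp hmax (v, v') (mem_univ _)

end GmapAux

namespace GmapAux

lemma pair_mem_diamSet_iff {X : Type*} [TopologicalSpace X] {x y : X} (hxy : x ≠ y)
    (f : C(X, ℂ)) :
    ({x, y} : Set X) ∈ diamSet f ↔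
      ‖f x - f y‖ = Metric.diam (Set.range ⇑f) := by
  constructor
  · rintro ⟨x', y', hne, heq, habs⟩
    rcases Set.pair_eq_pair_iff.mp heq.symm with ⟨rfl, rfl⟩ | ⟨rfl, rfl⟩
    · exact habs
    · rwa [norm_sub_rev] at habs
  · intro h; exact ⟨x, y, hxy, rfl, h⟩

lemma parallelogram (A B : ℂ) :
    Complex.normSq (A + B) + Complex.normSq (A - B)
      = 2 * (Complex.normSq A + Complex.normSq B) := by
  simp only [Complex.normSq_apply, Complex.add_re, Complex.add_im, Complex.sub_re,
    Complex.sub_im]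
  ring

lemma no_two {A B : ℂ} (hA : ‖A‖ = 1) (hB : ‖B‖ = 1)
    (h1 : ‖A - B‖ ≤ 1) (h2 : ‖A + B‖ ≤ 1) : False := by
  have e1 : Complex.normSq A = 1 := by rw [Complex.normSq_eq_norm_sq, hA]; norm_num
  have e2 : Complex.normSq B = 1 := by rw [Complex.normSq_eq_norm_sq, hB]; norm_num
  have e3 : Complex.normSq (A - B) ≤ 1 := by
    rw [Complex.normSq_eq_norm_sq]
    calc ‖A - B‖ ^ 2 ≤ 1 ^ 2 := by
          exact pow_le_pow_left₀ (norm_nonneg _) h1 2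
      _ = 1 := one_pow 2
  have e4 : Complex.normSq (A + B) ≤ 1 := by
    rw [Complex.normSq_eq_norm_sq]
    calc ‖A + B‖ ^ 2 ≤ 1 ^ 2 := by
          exact pow_le_pow_left₀ (norm_nonneg _) h2 2
      _ = 1 := one_pow 2
  have := parallelogram A B
  linarith

lemma complex_eq {lam v : ℂ} {d : ℝ} (hlam : ‖lam‖ = 1)
    (hv : ‖v‖ ≤ d) (h : ‖v + lam‖ = d + 1) :
    v = (d : ℂ) * lam := by
  have hd0 : 0 ≤ d := le_trans (norm_nonneg v) hv
  have hvd : ‖v‖ = d := by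
    have h1 : ‖v + lam‖ ≤ ‖v‖ + ‖lam‖ :=
      norm_add_le v lam
    rw [h, hlam] at h1
    linarith
  have h2 : Complex.normSq (v + lam) = (d + 1) ^ 2 := by
    rw [Complex.normSq_eq_norm_sq, h]
  rw [Complex.normSq_add] at h2
  have e1 : Complex.normSq v = d ^ 2 := by rw [Complex.normSq_eq_norm_sq, hvd]
  have e2 : Complex.normSq lam = 1 := by rw [Complex.normSq_eq_norm_sq, hlam]; norm_num
  have hre : (v * (starRingEnd ℂ) lam).re = d := by nlinarith
  have habsz : ‖v * (starRingEnd ℂ) lam‖ = d := by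
    rw [norm_mul, Complex.norm_conj, hvd, hlam, mul_one]
  have him : (v * (starRingEnd ℂ) lam).im = 0 := by
    have hsq := Complex.sq_norm (v * (starRingEnd ℂ) lam)
    rw [habsz, Complex.normSq_apply] at hsq
    nlinarith [sq_nonneg (v * (starRingEnd ℂ) lam).im,
      sq_nonneg (v * (starRingEnd ℂ) lam).re, hre]
  have hz : v * (starRingEnd ℂ) lam = (d : ℂ) := by
    apply Complex.ext
    · simp [hre]
    · simp [him]
  have hl : (starRingEnd ℂ) lam * lam = 1 := by
    rw [mul_comm, Complex.mul_conj, e2]; norm_num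
  calc v = v * ((starRingEnd ℂ) lam * lam) := by rw [hl, mul_one]
    _ = v * (starRingEnd ℂ) lam * lam := by ring
    _ = (d : ℂ) * lam := by rw [hz]

end GmapAux

namespace GmapAux

variable {X : Type*} [TopologicalSpace X]

lemma two_bounds [CompactSpace X] (h1 h2 : C(X, ℂ))
    (hD1 : Metric.diam (Set.range ⇑h1) ≤ 1) (hD2 : Metric.diam (Set.range ⇑h2) ≤ 1)
    {a b a' b' : X} (hcom : a = a' ∨ a = b' ∨ b = a' ∨ b = b') {A B : ℂ}
    (e1a : h1 a - h1 b = A) (e1b : h1 a' - h1 b' = B)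
    (e2a : h2 a - h2 b = A) (e2b : h2 a' - h2 b' = -B) :
    ‖A - B‖ ≤ 1 ∧ ‖A + B‖ ≤ 1 := by
  rcases hcom with rfl | rfl | rfl | rfl
  · constructor
    · have h := abs_sub_le_diam h1 b' b
      have e : A - B = h1 b' - h1 b := by linear_combination e1b - e1a
      rw [e]; exact le_trans h hD1
    · have h := abs_sub_le_diam h2 b' b
      have e : A + B = h2 b' - h2 b := by linear_combination e2b - e2a
      rw [e]; exact le_trans h hD2
  · constructor
    · have h := abs_sub_le_diam h2 a' b
      have e : A - B = h2 a' - h2 b := by linear_combination -e2a - e2b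
      rw [e]; exact le_trans h hD2
    · have h := abs_sub_le_diam h1 a' b
      have e : A + B = h1 a' - h1 b := by linear_combination -e1a - e1b
      rw [e]; exact le_trans h hD1
  · constructor
    · have h := abs_sub_le_diam h2 a b'
      have e : A - B = h2 a - h2 b' := by linear_combination -e2a - e2b
      rw [e]; exact le_trans h hD2
    · have h := abs_sub_le_diam h1 a b'
      have e : A + B = h1 a - h1 b' := by linear_combination -e1a - e1b
      rw [e]; exact le_trans h hD1
  · constructor
    · have h := abs_sub_le_diam h1 a a'
      have e : A - B = h1 a - h1 a' := by linear_combination e1b - e1a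
      rw [e]; exact le_trans h hD1
    · have h := abs_sub_le_diam h2 a a'
      have e : A + B = h2 a - h2 a' := by linear_combination e2b - e2a
      rw [e]; exact le_trans h hD2

/-- complexification of a real continuous map -/
def cx (g : C(X, ℝ)) : C(X, ℂ) :=
  ⟨fun w => (g w : ℂ), Complex.continuous_ofReal.comp g.continuous⟩

lemma cx_apply (g : C(X, ℝ)) (w : X) : cx g w = (g w : ℂ) := rfl

lemma cx_abs_sub (g : C(X, ℝ)) (w w' : X) :
    ‖cx g w - cx g w'‖ = |g w - g w'| := by
  rw [cx_apply, cx_apply, ← Complex.ofReal_sub, Complex.norm_real, Real.norm_eq_abs]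

lemma cx_diam_le_one (g : C(X, ℝ)) (hicc : ∀ w, g w ∈ Set.Icc (0 : ℝ) 1) :
    Metric.diam (Set.range ⇑(cx g)) ≤ 1 := by
  apply diam_le _ zero_le_one
  intro w w'
  rw [cx_abs_sub]
  have h1 := hicc w; have h2 := hicc w'
  rw [abs_le]
  constructor <;> [linarith [h1.1, h2.2]; linarith [h1.2, h2.1]]

/-- a real step function: 0 on s, 1 on t, values in [0,1], complexified -/
lemma exists_step [CompactSpace X] [T2Space X] {s t : Set X}
    (hs : s.Finite) (ht : t.Finite) (hd : Disjoint s t) :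
    ∃ g : C(X, ℂ), (∀ w ∈ s, g w = 0) ∧ (∀ w ∈ t, g w = 1) ∧
      Metric.diam (Set.range ⇑g) ≤ 1 := by
  obtain ⟨r, hr0, hr1, hicc⟩ :=
    exists_continuous_zero_one_of_isClosed hs.isClosed ht.isClosed hd
  refine ⟨cx r, ?_, ?_, cx_diam_le_one r hicc⟩
  · intro w hw; rw [cx_apply, hr0 hw]; simp
  · intro w hw; rw [cx_apply, hr1 hw]; simp

end GmapAux

namespace GmapAux

variable {X : Type*} [TopologicalSpace X]


lemma exists_vanish [CompactSpace X] [T2Space X] [FirstCountableTopology X] (x : X) :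
    ∃ u : C(X, ℝ), (∀ w, 0 ≤ u w) ∧ u x = 0 ∧ ∀ w, u w = 0 → w = x := by
  obtain ⟨U, hUopen, hU⟩ := (IsGδ.singleton x).eq_iInter_nat
  have hxU : ∀ n, x ∈ U n := by
    intro n
    have hx : x ∈ ⋂ n, U n := by rw [← hU]; exact Set.mem_singleton x
    exact Set.mem_iInter.mp hx n
  have hex : ∀ n : ℕ, ∃ r : C(X, ℝ), (Set.EqOn ⇑r 0 {x}) ∧ (Set.EqOn ⇑r 1 (U n)ᶜ) ∧
      ∀ w, r w ∈ Set.Icc (0 : ℝ) 1 := by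
    intro n
    apply exists_continuous_zero_one_of_isClosed isClosed_singleton (hUopen n).isClosed_compl
    rw [Set.disjoint_singleton_left]
    simp [hxU n]
  choose r hr0 hr1 hricc using hex
  have hsum : Summable fun n : ℕ => ((1 : ℝ) / 2) ^ (n + 1) := by
    apply Summable.mul_right
    exact summable_geometric_two
  have hptsum : ∀ w : X, Summable fun n : ℕ => ((1 : ℝ) / 2) ^ (n + 1) * r n w := by
    intro w
    apply Summable.of_nonneg_of_le (fun n => ?_) (fun n => ?_) hsum
    · have := (hricc n w).1; positivity
    · have h1 := (hricc n w).2
      have h0 : (0:ℝ) ≤ ((1 : ℝ) / 2) ^ (n + 1) := by positivity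
      calc ((1 : ℝ) / 2) ^ (n + 1) * r n w ≤ ((1 : ℝ) / 2) ^ (n + 1) * 1 := by
            exact mul_le_mul_of_nonneg_left h1 h0
        _ = ((1 : ℝ) / 2) ^ (n + 1) := mul_one _
  have hcont : Continuous fun w : X => ∑' n : ℕ, ((1 : ℝ) / 2) ^ (n + 1) * r n w := by
    apply continuous_tsum (fun n => continuous_const.mul (r n).continuous) hsum
    intro n w
    simp only [Pi.mul_apply]
    rw [Real.norm_eq_abs, abs_mul, _root_.abs_of_nonneg (by positivity : (0:ℝ) ≤ ((1:ℝ)/2)^(n+1)),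
      _root_.abs_of_nonneg (hricc n w).1]
    calc ((1 : ℝ) / 2) ^ (n + 1) * r n w ≤ ((1 : ℝ) / 2) ^ (n + 1) * 1 :=
          mul_le_mul_of_nonneg_left (hricc n w).2 (by positivity)
      _ = _ := mul_one _
  refine ⟨⟨fun w => ∑' n : ℕ, ((1 : ℝ) / 2) ^ (n + 1) * r n w, hcont⟩, ?_, ?_, ?_⟩
  · intro w
    exact tsum_nonneg fun n => mul_nonneg (by positivity) (hricc n w).1
  · simp only [ContinuousMap.coe_mk]
    have : ∀ n : ℕ, ((1 : ℝ) / 2) ^ (n + 1) * r n x = 0 := by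
      intro n
      rw [hr0 n (Set.mem_singleton x)]
      simp
    rw [tsum_congr this, tsum_zero]
  · intro w hw
    simp only [ContinuousMap.coe_mk] at hw
    by_contra hne
    have hwx : w ∉ ({x} : Set X) := by simpa using hne
    rw [hU] at hwx
    obtain ⟨n, hn⟩ : ∃ n, w ∉ U n := by
      by_contra hall
      push_neg at hall
      exact hwx (Set.mem_iInter.mpr hall)
    have hrn : r n w = 1 := hr1 n hn
    have hle : ((1 : ℝ) / 2) ^ (n + 1) * r n w ≤
        ∑' m : ℕ, ((1 : ℝ) / 2) ^ (m + 1) * r m w := by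
      apply Summable.le_tsum (hptsum w) n
      intro m _
      exact mul_nonneg (by positivity) (hricc m w).1
    rw [hrn, mul_one, hw] at hle
    have : (0:ℝ) < ((1 : ℝ) / 2) ^ (n + 1) := by positivity
    linarith

lemma exists_exact [CompactSpace X] [T2Space X] [FirstCountableTopology X] {x y : X}
    (hxy : x ≠ y) :
    ∃ g : C(X, ℝ), g x = 1 ∧ g y = 0 ∧ (∀ w, g w ∈ Set.Icc (0 : ℝ) 1) ∧
      (∀ w, g w = 1 → w = x) ∧ (∀ w, g w = 0 → w = y) := by
  obtain ⟨u, hu0, hux, huex⟩ := exists_vanish x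
  obtain ⟨v, hv0, hvy, hvex⟩ := exists_vanish y
  obtain ⟨k, hk0, hk1, hkicc⟩ := exists_continuous_zero_one_of_isClosed
    (isClosed_singleton (x := x)) (isClosed_singleton (x := y))
    (by rw [Set.disjoint_singleton_left]; simpa using hxy)
  have hkx : k x = 0 := hk0 (Set.mem_singleton x)
  have hky : k y = 1 := hk1 (Set.mem_singleton y)
  refine ⟨⟨fun w => (min 1 (v w + (1 - k w)) + (1 - min 1 (u w + k w))) / 2, by
    apply Continuous.div_const
    apply Continuous.add
    · exact continuous_const.min ((v.continuous.add (continuous_const.sub k.continuous)))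
    · exact continuous_const.sub (continuous_const.min (u.continuous.add k.continuous))⟩,
    ?_, ?_, ?_, ?_, ?_⟩
  · simp only [ContinuousMap.coe_mk]
    have hvx : 0 < v x := lt_of_le_of_ne (hv0 x) (fun h => hxy (hvex x h.symm))
    have h1 : min 1 (v x + (1 - k x)) = 1 := min_eq_left (by rw [hkx]; linarith)
    have h2 : min 1 (u x + k x) = 0 := by rw [hux, hkx]; simp
    rw [h1, h2]; norm_num
  · simp only [ContinuousMap.coe_mk]
    have h1 : min 1 (v y + (1 - k y)) = 0 := by rw [hvy, hky]; simp
    have h2 : min 1 (u y + k y) = 1 := min_eq_left (by rw [hky]; linarith [hu0 y])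
    rw [h1, h2]; norm_num
  · intro w
    simp only [ContinuousMap.coe_mk]
    have hA1 : min 1 (v w + (1 - k w)) ≤ 1 := min_le_left _ _
    have hA0 : 0 ≤ min 1 (v w + (1 - k w)) :=
      le_min zero_le_one (by linarith [hv0 w, (hkicc w).2])
    have hB1 : min 1 (u w + k w) ≤ 1 := min_le_left _ _
    have hB0 : 0 ≤ min 1 (u w + k w) :=
      le_min zero_le_one (by linarith [hu0 w, (hkicc w).1])
    refine ⟨by apply div_nonneg ?_ (by norm_num); linarith, by
      rw [div_le_one (by norm_num)]; linarith⟩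
  · intro w hw
    simp only [ContinuousMap.coe_mk] at hw
    have hA1 : min 1 (v w + (1 - k w)) ≤ 1 := min_le_left _ _
    have hB0 : 0 ≤ min 1 (u w + k w) :=
      le_min zero_le_one (by linarith [hu0 w, (hkicc w).1])
    have h2 : min 1 (v w + (1 - k w)) + (1 - min 1 (u w + k w)) = 2 := by
      field_simp at hw; linarith
    have hB : min 1 (u w + k w) = 0 := by linarith
    have huk : u w + k w = 0 := by
      rcases min_cases 1 (u w + k w) with ⟨h, hle⟩ | ⟨h, _⟩
      · rw [h] at hB; norm_num at hB
      · rw [h] at hB; exact hB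
    have : u w = 0 := by linarith [hu0 w, (hkicc w).1]
    exact huex w this
  · intro w hw
    simp only [ContinuousMap.coe_mk] at hw
    have hB1 : min 1 (u w + k w) ≤ 1 := min_le_left _ _
    have hA0 : 0 ≤ min 1 (v w + (1 - k w)) :=
      le_min zero_le_one (by linarith [hv0 w, (hkicc w).2])
    have h2 : min 1 (v w + (1 - k w)) + (1 - min 1 (u w + k w)) = 0 := by
      field_simp at hw; linarith
    have hA : min 1 (v w + (1 - k w)) = 0 := by linarith
    have hvk : v w + (1 - k w) = 0 := by
      rcases min_cases 1 (v w + (1 - k w)) with ⟨h, hle⟩ | ⟨h, _⟩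
      · rw [h] at hA; norm_num at hA
      · rw [h] at hA; exact hA
    have : v w = 0 := by linarith [hv0 w, (hkicc w).2]
    exact hvex w this

end GmapAux

namespace GmapAux

lemma multiplier {X : Type*} [TopologicalSpace X] [CompactSpace X] [T2Space X]
    [FirstCountableTopology X]
    (φ : C(X, ℂ) →ₗ[ℂ] C(X, ℂ)) (hdp : DiamPreserving ⇑φ)
    {x y a b : X} (hxy : x ≠ y) (hab : a ≠ b)
    (hmem : ∀ f : C(X, ℂ), ({x, y} : Set X) ∈ diamSet f →
      ({a, b} : Set X) ∈ diamSet (φ f)) :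
    ∃ lam : ℂ, ‖lam‖ = 1 ∧
      (∀ f : C(X, ℂ), ‖f x - f y‖ = Metric.diam (Set.range ⇑f) →
        φ f a - φ f b = lam * (f x - f y)) ∧
      (∀ f : C(X, ℂ), ‖φ f a - φ f b‖ = Metric.diam (Set.range ⇑(φ f)) →
        ‖f x - f y‖ = Metric.diam (Set.range ⇑f)) := by
  obtain ⟨g₀, hg1, hg0, hgicc, hgex1, hgex0⟩ := exists_exact hxy
  set G : C(X, ℂ) := cx g₀ with hGdef
  have hGd : G x - G y = 1 := by
    rw [cx_apply, cx_apply, hg1, hg0]; norm_num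
  have hDG : Metric.diam (Set.range ⇑G) = 1 := by
    refine le_antisymm (cx_diam_le_one g₀ hgicc) ?_
    have h := abs_sub_le_diam G x y
    rwa [hGd, norm_one] at h
  have hGmem : ({x, y} : Set X) ∈ diamSet G :=
    (pair_mem_diamSet_iff hxy G).2 (by rw [hGd, norm_one, hDG])
  have hablam := (pair_mem_diamSet_iff hab (φ G)).1 (hmem G hGmem)
  rw [hdp G, hDG] at hablam
  set lam : ℂ := φ G a - φ G b with hlamdef
  have hlam : ‖lam‖ = 1 := hablam
  have part1 : ∀ f : C(X, ℂ), ‖f x - f y‖ = Metric.diam (Set.range ⇑f) →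
      φ f a - φ f b = lam * (f x - f y) := by
    intro f hf
    rcases eq_or_lt_of_le (Metric.diam_nonneg (s := Set.range ⇑f)) with hd0 | hdpos
    · have hfxy : f x - f y = 0 := by
        have : ‖f x - f y‖ = 0 := by rw [hf, ← hd0]
        exact norm_eq_zero.mp this
      have hD0 : Metric.diam (Set.range ⇑(φ f)) = 0 := by rw [hdp f, ← hd0]
      have habφ : ‖φ f a - φ f b‖ = 0 := by
        have h := abs_sub_le_diam (φ f) a b
        rw [hD0] at h
        exact le_antisymm h (norm_nonneg _)
      rw [norm_eq_zero.mp habφ, hfxy, mul_zero]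
    · set d : ℝ := Metric.diam (Set.range ⇑f) with hddef
      set u : ℂ := f x - f y with hudef
      have hu : ‖u‖ = d := hf
      have hu0 : u ≠ 0 := by
        intro h; rw [h] at hu; simp at hu; rw [← hu] at hdpos; exact lt_irrefl _ hdpos
      have hd0 : (d : ℂ) ≠ 0 := by
        simp only [ne_eq, Complex.ofReal_eq_zero]
        exact ne_of_gt hdpos
      set c : ℂ := (d : ℂ) / u with hcdef
      have hc : ‖c‖ = 1 := by
        rw [hcdef, norm_div, Complex.norm_real, Real.norm_eq_abs, _root_.abs_of_nonneg hdpos.le, hu,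
          div_self (ne_of_gt hdpos)]
      have hc0 : c ≠ 0 := by
        rw [hcdef]; exact div_ne_zero hd0 hu0
      set h : C(X, ℂ) := c • f with hhdef
      have hhd : h x - h y = (d : ℂ) := by
        rw [hhdef]
        simp only [ContinuousMap.smul_apply, smul_eq_mul]
        rw [← mul_sub, ← hudef, hcdef, div_mul_cancel₀ _ hu0]
      have hDh : Metric.diam (Set.range ⇑h) = d := by rw [hhdef, diam_smul f hc]
      set F : C(X, ℂ) := h + G with hFdef
      have hFd : F x - F y = (d : ℂ) + 1 := by
        rw [hFdef]
        simp only [ContinuousMap.add_apply]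
        linear_combination hhd + hGd
      have habF : ‖F x - F y‖ = d + 1 := by
        rw [hFd]
        rw [show (d : ℂ) + 1 = ((d + 1 : ℝ) : ℂ) by push_cast; ring, Complex.norm_real, Real.norm_eq_abs,
          _root_.abs_of_nonneg (by linarith)]
      have hDF : Metric.diam (Set.range ⇑F) = d + 1 := by
        refine le_antisymm ?_ ?_
        · have := diam_add_le h G
          rw [hDh, hDG] at this
          exact this
        · have h2 := abs_sub_le_diam F x y
          rwa [habF] at h2
      have hFmem : ({x, y} : Set X) ∈ diamSet F :=
        (pair_mem_diamSet_iff hxy F).2 (by rw [habF, hDF])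
      have habφF := (pair_mem_diamSet_iff hab (φ F)).1 (hmem F hFmem)
      rw [hdp F, hDF] at habφF
      have hφFab : φ F a - φ F b = (φ h a - φ h b) + lam := by
        rw [hFdef, map_add]
        simp only [ContinuousMap.add_apply, hlamdef]
        ring
      rw [hφFab] at habφF
      have hv : ‖φ h a - φ h b‖ ≤ d := by
        have h2 := abs_sub_le_diam (φ h) a b
        rwa [hdp h, hDh] at h2
      have hveq : φ h a - φ h b = (d : ℂ) * lam := complex_eq hlam hv habφF
      have hfh : f = c⁻¹ • h := by
        rw [hhdef, smul_smul, inv_mul_cancel₀ hc0, one_smul]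
      have : φ f a - φ f b = c⁻¹ * (φ h a - φ h b) := by
        rw [hfh, map_smul]
        simp only [ContinuousMap.smul_apply, smul_eq_mul]
        ring
      rw [this, hveq, hcdef]
      field_simp
  refine ⟨lam, hlam, part1, ?_⟩
  intro f hf
  rcases eq_or_lt_of_le (Metric.diam_nonneg (s := Set.range ⇑f)) with hd0 | hdpos
  · have h2 := abs_sub_le_diam f x y
    rw [← hd0] at h2 ⊢
    exact le_antisymm h2 (norm_nonneg _)
  · set d : ℝ := Metric.diam (Set.range ⇑f) with hddef
    have hd0 : (d : ℂ) ≠ 0 := by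
      simp only [ne_eq, Complex.ofReal_eq_zero]; exact ne_of_gt hdpos
    have hlam0 : lam ≠ 0 := by
      intro h; rw [h] at hlam; simp at hlam
    set v : ℂ := φ f a - φ f b with hvdef
    have hv : ‖v‖ = d := by rw [hvdef, hf, hdp f]
    set μ : ℂ := v / ((d : ℂ) * lam) with hμdef
    have hμ : ‖μ‖ = 1 := by
      rw [hμdef, norm_div, norm_mul, Complex.norm_real, Real.norm_eq_abs, _root_.abs_of_nonneg hdpos.le,
        hlam, mul_one, hv, div_self (ne_of_gt hdpos)]
    set Gμ : C(X, ℂ) := μ • G with hGμdef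
    have hGμd : Gμ x - Gμ y = μ := by
      rw [hGμdef]
      simp only [ContinuousMap.smul_apply, smul_eq_mul]
      rw [← mul_sub, hGd, mul_one]
    have hDGμ : Metric.diam (Set.range ⇑Gμ) = 1 := by rw [hGμdef, diam_smul G hμ, hDG]
    have hGμab : φ Gμ a - φ Gμ b = v / (d : ℂ) := by
      have h2 := part1 Gμ (by rw [hGμd, hμ, hDGμ])
      rw [hGμd] at h2
      rw [h2, hμdef]
      field_simp
    set F : C(X, ℂ) := f + Gμ with hFdef
    have hφF : φ F a - φ F b = v + v / (d : ℂ) := by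
      rw [hFdef, map_add]
      simp only [ContinuousMap.add_apply]
      linear_combination hGμab - hvdef + hvdef + hvdef - hvdef
    have habφF : ‖φ F a - φ F b‖ = d + 1 := by
      rw [hφF, show v + v / (d : ℂ) = v * (((d : ℝ) + 1 : ℂ) / (d : ℂ)) by
        field_simp]
      rw [norm_mul, norm_div, hv]
      rw [show ((d : ℝ) + 1 : ℂ) = ((d + 1 : ℝ) : ℂ) by push_cast; ring]
      rw [Complex.norm_real, Real.norm_eq_abs, Complex.norm_real, Real.norm_eq_abs, _root_.abs_of_nonneg (by linarith),
        _root_.abs_of_nonneg hdpos.le]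
      field_simp
    have hDF : Metric.diam (Set.range ⇑F) = d + 1 := by
      refine le_antisymm ?_ ?_
      · have := diam_add_le f Gμ
        rw [← hddef, hDGμ] at this
        exact this
      · have h2 := abs_sub_le_diam (φ F) a b
        rw [habφF, hdp F] at h2
        exact h2
    have : Nonempty X := ⟨x⟩
    obtain ⟨w, w', hww⟩ := exists_attain F
    rw [hDF] at hww
    have hsplit : F w - F w' = (f w - f w') + (Gμ w - Gμ w') := by
      rw [hFdef]; simp only [ContinuousMap.add_apply]; ring
    have hb1 : ‖f w - f w'‖ ≤ d := by
      have := abs_sub_le_diam f w w'; rwa [← hddef] at this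
    have hb2 : ‖Gμ w - Gμ w'‖ = |g₀ w - g₀ w'| := by
      rw [hGμdef]
      simp only [ContinuousMap.smul_apply, smul_eq_mul]
      rw [← mul_sub, norm_mul, hμ, one_mul, hGdef, cx_abs_sub]
    have hb2' : |g₀ w - g₀ w'| ≤ 1 := by
      have h1 := hgicc w; have h2 := hgicc w'
      rw [abs_le]; constructor <;> [linarith [h1.1, h2.2]; linarith [h1.2, h2.1]]
    have htri : d + 1 ≤ ‖f w - f w'‖ + ‖Gμ w - Gμ w'‖ := by
      rw [← hww, hsplit]
      exact norm_add_le _ _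
    have he2 : |g₀ w - g₀ w'| = 1 := by
      rw [hb2] at htri
      linarith
    have he1 : ‖f w - f w'‖ = d := by
      rw [hb2] at htri
      linarith
    have hcase : (g₀ w = 1 ∧ g₀ w' = 0) ∨ (g₀ w = 0 ∧ g₀ w' = 1) := by
      have h1 := hgicc w; have h2 := hgicc w'
      rcases abs_cases (g₀ w - g₀ w') with ⟨h3, _⟩ | ⟨h3, _⟩ <;> rw [h3] at he2
      · left; constructor <;> linarith [h1.2, h2.1]
      · right; constructor <;> linarith [h1.1, h2.2]
    rcases hcase with ⟨hw1, hw0⟩ | ⟨hw0, hw1⟩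
    · have hwx : w = x := hgex1 w hw1
      have hwy : w' = y := hgex0 w' hw0
      rw [hwx, hwy] at he1
      exact he1
    · have hwx : w' = x := hgex1 w' hw1
      have hwy : w = y := hgex0 w hw0
      rw [hwx, hwy] at he1
      rw [norm_sub_rev]
      exact he1

end GmapAux

namespace GmapAux

lemma exists_step4 {X : Type*} [TopologicalSpace X] [CompactSpace X] [T2Space X]
    {p1 p2 q1 q2 : X} (h1 : q1 ≠ p1) (h2 : q1 ≠ p2) (h3 : q2 ≠ p1) (h4 : q2 ≠ p2) :
    ∃ g : C(X, ℂ), g p1 = 1 ∧ g p2 = 1 ∧ g q1 = 0 ∧ g q2 = 0 ∧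
      Metric.diam (Set.range ⇑g) = 1 := by
  have hdisj : Disjoint ({q1, q2} : Set X) {p1, p2} := by
    rw [Set.disjoint_left]
    intro w hw1 hw2
    simp only [Set.mem_insert_iff, Set.mem_singleton_iff] at hw1 hw2
    rcases hw1 with rfl | rfl <;> rcases hw2 with rfl | rfl <;> tauto
  obtain ⟨g, hz, ho, hdiam⟩ := exists_step
    (Set.Finite.insert q1 (Set.finite_singleton q2))
    (Set.Finite.insert p1 (Set.finite_singleton p2)) hdisj
  have hp1 : g p1 = 1 := ho p1 (by simp)
  have hp2 : g p2 = 1 := ho p2 (by simp)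
  have hq1 : g q1 = 0 := hz q1 (by simp)
  have hq2 : g q2 = 0 := hz q2 (by simp)
  refine ⟨g, hp1, hp2, hq1, hq2, le_antisymm hdiam ?_⟩
  have h := abs_sub_le_diam g p1 q1
  rwa [hp1, hq1, sub_zero, norm_one] at h

end GmapAux



/-- Step 6: two two-element subsets are disjoint iff their `G'`-images are disjoint. -/
theorem Gmap_disjoint_iff
    {X : Type*} [TopologicalSpace X] [CompactSpace X] [T2Space X]
    [FirstCountableTopology X]
    (h3 : ∃ a b c : X, a ≠ b ∧ a ≠ c ∧ b ≠ c)
    (φ : C(X, ℂ) →ₗ[ℂ] C(X, ℂ)) (hbij : Function.Bijective φ)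
    (hdp : DiamPreserving (⇑φ))
    (G' : TwoSet X → TwoSet X) (hG'bij : Function.Bijective G')
    (hG' : ∀ p : TwoSet X, Gset (⇑φ) p.val = {(G' p).val})
    (p q : TwoSet X) :
    p.val ∩ q.val = ∅ ↔ (G' p).val ∩ (G' q).val = ∅ := by
  obtain ⟨x, y, hxy, hp⟩ := p.2
  obtain ⟨x', y', hx'y', hq⟩ := q.2
  obtain ⟨a, b, hab, hgp⟩ := (G' p).2
  obtain ⟨a', b', ha'b', hgq⟩ := (G' q).2
  have hmem_p : ∀ f : C(X, ℂ), ({x, y} : Set X) ∈ diamSet f →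
      ({a, b} : Set X) ∈ diamSet (φ f) := by
    intro f hf
    have h1 : (G' p).val ∈ Gset ⇑φ p.val := by rw [hG' p]; rfl
    have h2 := h1 f (by rw [hp]; exact hf)
    rwa [hgp] at h2
  have hmem_q : ∀ f : C(X, ℂ), ({x', y'} : Set X) ∈ diamSet f →
      ({a', b'} : Set X) ∈ diamSet (φ f) := by
    intro f hf
    have h1 : (G' q).val ∈ Gset ⇑φ q.val := by rw [hG' q]; rfl
    have h2 := h1 f (by rw [hq]; exact hf)
    rwa [hgq] at h2
  obtain ⟨l1, hl1, hfor1, hrev1⟩ := GmapAux.multiplier φ hdp hxy hab hmem_p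
  obtain ⟨l2, hl2, hfor2, hrev2⟩ := GmapAux.multiplier φ hdp hx'y' ha'b' hmem_q
  rw [hp, hq, hgp, hgq]
  constructor
  · intro hdisj
    by_contra hne
    obtain ⟨e, he1, he2⟩ := Set.nonempty_iff_ne_empty.mpr hne
    have hcom : a = a' ∨ a = b' ∨ b = a' ∨ b = b' := by
      simp only [Set.mem_insert_iff, Set.mem_singleton_iff] at he1 he2
      rcases he1 with rfl | rfl <;> rcases he2 with h | h <;> tauto
    have hd : ∀ w, w ∈ ({x, y} : Set X) → w ∉ ({x', y'} : Set X) := by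
      intro w hw1 hw2
      have h0 : w ∈ ({x, y} : Set X) ∩ {x', y'} := ⟨hw1, hw2⟩
      rw [hdisj] at h0
      exact h0
    have hyx' : y ≠ x' := fun h => hd y (by simp) (by simp [h])
    have hyy' : y ≠ y' := fun h => hd y (by simp) (by simp [h])
    have hy'x : y' ≠ x := fun h => hd x (by simp) (by simp [← h])
    have hxx' : x ≠ x' := fun h => hd x (by simp) (by simp [h])
    obtain ⟨f1, f1x, f1x', f1y, f1y', hDf1⟩ :=
      GmapAux.exists_step4 (p1 := x) (p2 := x') (q1 := y) (q2 := y')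
        (Ne.symm hxy) hyx' hy'x hx'y'.symm
    obtain ⟨f2, f2x, f2y', f2y, f2x', hDf2⟩ :=
      GmapAux.exists_step4 (p1 := x) (p2 := y') (q1 := y) (q2 := x')
        (Ne.symm hxy) hyy' hxx'.symm hx'y'
    have e1a : φ f1 a - φ f1 b = l1 := by
      have h := hfor1 f1 (by rw [f1x, f1y, sub_zero, norm_one, hDf1])
      rwa [f1x, f1y, sub_zero, mul_one] at h
    have e1b : φ f1 a' - φ f1 b' = l2 := by
      have h := hfor2 f1 (by rw [f1x', f1y', sub_zero, norm_one, hDf1])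
      rwa [f1x', f1y', sub_zero, mul_one] at h
    have e2a : φ f2 a - φ f2 b = l1 := by
      have h := hfor1 f2 (by rw [f2x, f2y, sub_zero, norm_one, hDf2])
      rwa [f2x, f2y, sub_zero, mul_one] at h
    have e2b : φ f2 a' - φ f2 b' = -l2 := by
      have h := hfor2 f2 (by
        rw [f2x', f2y', zero_sub, norm_neg, norm_one, hDf2])
      rw [f2x', f2y'] at h
      rw [h]; ring
    have hDφ1 : Metric.diam (Set.range ⇑(φ f1)) ≤ 1 := by rw [hdp f1, hDf1]
    have hDφ2 : Metric.diam (Set.range ⇑(φ f2)) ≤ 1 := by rw [hdp f2, hDf2]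
    obtain ⟨hA, hB⟩ := GmapAux.two_bounds (φ f1) (φ f2) hDφ1 hDφ2 hcom e1a e1b e2a e2b
    exact GmapAux.no_two hl1 hl2 hA hB
  · intro hdisj
    by_contra hne
    obtain ⟨e, he1, he2⟩ := Set.nonempty_iff_ne_empty.mpr hne
    have hcom : x = x' ∨ x = y' ∨ y = x' ∨ y = y' := by
      simp only [Set.mem_insert_iff, Set.mem_singleton_iff] at he1 he2
      rcases he1 with rfl | rfl <;> rcases he2 with h | h <;> tauto
    have hd : ∀ w, w ∈ ({a, b} : Set X) → w ∉ ({a', b'} : Set X) := by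
      intro w hw1 hw2
      have h0 : w ∈ ({a, b} : Set X) ∩ {a', b'} := ⟨hw1, hw2⟩
      rw [hdisj] at h0
      exact h0
    have hba' : b ≠ a' := fun h => hd b (by simp) (by simp [h])
    have hbb' : b ≠ b' := fun h => hd b (by simp) (by simp [h])
    have hb'a : b' ≠ a := fun h => hd a (by simp) (by simp [← h])
    have haa' : a ≠ a' := fun h => hd a (by simp) (by simp [h])
    obtain ⟨g1, g1a, g1a', g1b, g1b', hDg1⟩ :=
      GmapAux.exists_step4 (p1 := a) (p2 := a') (q1 := b) (q2 := b')
        (Ne.symm hab) hba' hb'a ha'b'.symm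
    obtain ⟨g2, g2a, g2b', g2b, g2a', hDg2⟩ :=
      GmapAux.exists_step4 (p1 := a) (p2 := b') (q1 := b) (q2 := a')
        (Ne.symm hab) hbb' haa'.symm ha'b'
    obtain ⟨f1, hφf1⟩ := hbij.2 g1
    obtain ⟨f2, hφf2⟩ := hbij.2 g2
    have hl10 : l1 ≠ 0 := by intro h; rw [h] at hl1; simp at hl1
    have hl20 : l2 ≠ 0 := by intro h; rw [h] at hl2; simp at hl2
    -- f1 relations
    have hrevf1p : ‖f1 x - f1 y‖ = Metric.diam (Set.range ⇑f1) := by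
      apply hrev1 f1
      rw [hφf1, g1a, g1b, sub_zero, norm_one, hDg1]
    have hf1p : l1 * (f1 x - f1 y) = 1 := by
      have h := hfor1 f1 hrevf1p
      rw [hφf1, g1a, g1b, sub_zero] at h
      exact h.symm
    have hrevf1q : ‖f1 x' - f1 y'‖ = Metric.diam (Set.range ⇑f1) := by
      apply hrev2 f1
      rw [hφf1, g1a', g1b', sub_zero, norm_one, hDg1]
    have hf1q : l2 * (f1 x' - f1 y') = 1 := by
      have h := hfor2 f1 hrevf1q
      rw [hφf1, g1a', g1b', sub_zero] at h
      exact h.symm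
    -- f2 relations
    have hrevf2p : ‖f2 x - f2 y‖ = Metric.diam (Set.range ⇑f2) := by
      apply hrev1 f2
      rw [hφf2, g2a, g2b, sub_zero, norm_one, hDg2]
    have hf2p : l1 * (f2 x - f2 y) = 1 := by
      have h := hfor1 f2 hrevf2p
      rw [hφf2, g2a, g2b, sub_zero] at h
      exact h.symm
    have hrevf2q : ‖f2 x' - f2 y'‖ = Metric.diam (Set.range ⇑f2) := by
      apply hrev2 f2
      rw [hφf2, g2a', g2b', zero_sub, norm_neg, norm_one, hDg2]
    have hf2q : l2 * (f2 x' - f2 y') = -1 := by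
      have h := hfor2 f2 hrevf2q
      rw [hφf2, g2a', g2b'] at h
      rw [← h]; ring
    set A : ℂ := f1 x - f1 y with hAdef
    set B : ℂ := f1 x' - f1 y' with hBdef
    have hA1 : ‖A‖ = 1 := by
      have h := congrArg norm hf1p
      rw [norm_mul, hl1, one_mul, norm_one] at h
      exact h
    have hB1 : ‖B‖ = 1 := by
      have h := congrArg norm hf1q
      rw [norm_mul, hl2, one_mul, norm_one] at h
      exact h
    have e2a : f2 x - f2 y = A := by
      apply mul_left_cancel₀ hl10
      rw [hf2p, hf1p]
    have e2b : f2 x' - f2 y' = -B := by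
      apply mul_left_cancel₀ hl20
      rw [hf2q, mul_neg, hf1q]
    have hDf1 : Metric.diam (Set.range ⇑f1) ≤ 1 := by
      rw [← hdp f1, hφf1, hDg1]
    have hDf2 : Metric.diam (Set.range ⇑f2) ≤ 1 := by
      rw [← hdp f2, hφf2, hDg2]
    obtain ⟨hA, hB⟩ := GmapAux.two_bounds f1 f2 hDf1 hDf2 hcom rfl rfl e2a e2b
    exact GmapAux.no_two hA1 hB1 hA hB
end

section
/- Let X be a first countable compact Hausdorff topological space with at least three points and let φ : C(X,ℂ) → C(X,ℂ) be a diameter preserving linear bijection. Let G' be the bijection of the collection of two-element subsets of X associated with φ via G({x,y}) = {G'({x,y})}, and let G'_{-1} be the map associated in the same way with the inverse map φ⁻¹ (which is also a diameter preserving linear bijection). Then G'_{-1} = (G')⁻¹. -/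
/-- Key rigidity lemma: if a two-element set `q` lies in `S(f)` for every `f`
with `p ∈ S(f)`, then `q = p`. -/
lemma twoSet_eq_of_forall_diamSet {X : Type*} [TopologicalSpace X] [CompactSpace X]
    [T2Space X] (p q : TwoSet X)
    (h : ∀ f : C(X, ℂ), p.val ∈ diamSet f → q.val ∈ diamSet f) : q = p := by
  obtain ⟨a, b, hab, hp⟩ := p.2
  obtain ⟨x, y, hxy, hq⟩ := q.2
  have claim : ∀ c : X, c ∈ q.val → c = a ∨ c = b := by
    intro c hc
    by_contra hcon
    push_neg at hcon
    obtain ⟨hca, hcb⟩ := hcon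
    obtain ⟨g1, hg1a, hg1bc, hg1r⟩ := exists_continuous_zero_one_of_isClosed
      (isClosed_singleton (x := a)) (((Set.finite_singleton c).insert b).isClosed)
      (by simp only [Set.disjoint_singleton_left, Set.mem_insert_iff, Set.mem_singleton_iff]; exact fun h => h.elim hab (fun h' => hca h'.symm))
    obtain ⟨g2, hg2ac, hg2b, hg2r⟩ := exists_continuous_zero_one_of_isClosed
      (((Set.finite_singleton c).insert a).isClosed) (isClosed_singleton (x := b))
      (by simp only [Set.disjoint_singleton_right, Set.mem_insert_iff, Set.mem_singleton_iff]; exact fun h => h.elim (fun h' => hab h'.symm) (fun h' => hcb h'.symm))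
    set h0 : X → ℝ := fun z => (g1 z + g2 z) / 2 with hh0
    have hcont : Continuous h0 := (g1.continuous.add g2.continuous).div_const 2
    set G : C(X, ℂ) := ⟨fun z => ((h0 z : ℝ) : ℂ), Complex.continuous_ofReal.comp hcont⟩
      with hG
    have hrange : ∀ z, h0 z ∈ Set.Icc (0:ℝ) 1 := by
      intro z
      have h1 := hg1r z; have h2 := hg2r z
      simp only [Set.mem_Icc] at h1 h2 ⊢
      constructor <;> simp only [hh0] <;> linarith [h1.1, h1.2, h2.1, h2.2]
    have h0a : h0 a = 0 := by
      have e1 : g1 a = 0 := hg1a (Set.mem_singleton a)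
      have e2 : g2 a = 0 := hg2ac (Set.mem_insert a {c})
      simp only [hh0]
      rw [e1, e2]; ring
    have h0b : h0 b = 1 := by
      have e1 : g1 b = 1 := hg1bc (Set.mem_insert b {c})
      have e2 : g2 b = 1 := hg2b (Set.mem_singleton b)
      simp only [hh0]
      rw [e1, e2]; ring
    have h0c : h0 c = 1/2 := by
      have e1 : g1 c = 1 := hg1bc (Set.mem_insert_of_mem b (Set.mem_singleton c))
      have e2 : g2 c = 0 := hg2ac (Set.mem_insert_of_mem a (Set.mem_singleton c))
      simp only [hh0]
      rw [e1, e2]; ring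
    have hGdiff : ∀ z w : X, ‖G z - G w‖ = |h0 z - h0 w| := by
      intro z w
      rw [show G z - G w = ((h0 z : ℝ) : ℂ) - ((h0 w : ℝ) : ℂ) from rfl, ← Complex.ofReal_sub]
      exact Complex.norm_real _
    have hGab : dist (G a) (G b) = 1 := by
      rw [Complex.dist_eq, hGdiff, h0a, h0b]; norm_num
    have hdle : Metric.diam (Set.range ⇑G) ≤ 1 := by
      apply Metric.diam_le_of_forall_dist_le zero_le_one
      rintro _ ⟨z, rfl⟩ _ ⟨w, rfl⟩
      rw [Complex.dist_eq, hGdiff]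
      have hz := hrange z; have hw := hrange w
      rw [abs_sub_le_iff]
      exact ⟨by linarith [hz.2, hw.1], by linarith [hw.2, hz.1]⟩
    have hdge : (1:ℝ) ≤ Metric.diam (Set.range ⇑G) := by
      rw [← hGab]
      exact Metric.dist_le_diam_of_mem (isCompact_range G.continuous).isBounded
        ⟨a, rfl⟩ ⟨b, rfl⟩
    have hdiam : Metric.diam (Set.range ⇑G) = 1 := le_antisymm hdle hdge
    have hpG : p.val ∈ diamSet G := by
      refine ⟨a, b, hab, hp, ?_⟩
      rw [hdiam, hGdiff, h0a, h0b]; norm_num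
    obtain ⟨x', y', hxy', hq', habs⟩ := h G hpG
    rw [hdiam, hGdiff] at habs
    have hc' : c = x' ∨ c = y' := by
      rw [hq'] at hc
      simpa using hc
    rcases hc' with rfl | rfl
    · have hy := hrange y'
      have : |h0 c - h0 y'| ≤ 1/2 :=
        abs_le.mpr ⟨by linarith [hy.2, h0c.ge, h0c.le], by linarith [hy.1, h0c.le]⟩
      linarith [habs, this]
    · have hx := hrange x'
      have : |h0 x' - h0 c| ≤ 1/2 :=
        abs_le.mpr ⟨by linarith [hx.1, h0c.le], by linarith [hx.2, h0c.le]⟩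
      linarith [habs, this]
  have hx' : x = a ∨ x = b := claim x (by rw [hq]; exact Set.mem_insert x {y})
  have hy' : y = a ∨ y = b := claim y
    (by rw [hq]; exact Set.mem_insert_of_mem x (Set.mem_singleton y))
  apply Subtype.ext
  rw [hq, hp]
  rcases hx' with rfl | rfl <;> rcases hy' with rfl | rfl
  · exact absurd rfl hxy
  · rfl
  · exact Set.pair_comm x y
  · exact absurd rfl hxy

/-- The map `G'_{-1}` associated with `φ⁻¹` is the inverse of the map `G'`
associated with `φ`. -/
theorem Gmap_inv_eq_inv_Gmap
    {X : Type*} [TopologicalSpace X] [CompactSpace X] [T2Space X]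
    [FirstCountableTopology X]
    (h3 : ∃ a b c : X, a ≠ b ∧ a ≠ c ∧ b ≠ c)
    (φ : C(X, ℂ) ≃ₗ[ℂ] C(X, ℂ)) (hdp : DiamPreserving (⇑φ))
    (G' : TwoSet X → TwoSet X)
    (hG' : ∀ p : TwoSet X, Gset (⇑φ) p.val = {(G' p).val})
    (G'inv : TwoSet X → TwoSet X)
    (hG'inv : ∀ p : TwoSet X, Gset (⇑φ.symm) p.val = {(G'inv p).val}) :
    ∀ p : TwoSet X, G'inv (G' p) = p ∧ G' (G'inv p) = p := by
  intro p
  constructor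
  · have hA : (G' p).val ∈ Gset (⇑φ) p.val := by
      rw [hG' p]; exact Set.mem_singleton _
    have hB : (G'inv (G' p)).val ∈ Gset (⇑φ.symm) (G' p).val := by
      rw [hG'inv (G' p)]; exact Set.mem_singleton _
    apply twoSet_eq_of_forall_diamSet p (G'inv (G' p))
    intro f hf
    have h1 := hA f hf
    have h2 := hB (φ f) h1
    rwa [φ.symm_apply_apply] at h2
  · have hA : (G'inv p).val ∈ Gset (⇑φ.symm) p.val := by
      rw [hG'inv p]; exact Set.mem_singleton _
    have hB : (G' (G'inv p)).val ∈ Gset (⇑φ) (G'inv p).val := by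
      rw [hG' (G'inv p)]; exact Set.mem_singleton _
    apply twoSet_eq_of_forall_diamSet p (G' (G'inv p))
    intro f hf
    have h1 := hA f hf
    have h2 := hB (φ.symm f) h1
    rwa [φ.apply_symm_apply] at h2
end

section
/- Let X be a first countable compact Hausdorff topological space with at least three points, let φ : C(X,ℂ) → C(X,ℂ) be a diameter preserving linear bijection, and let G' be the bijection of the collection of two-element subsets of X determined by G({x,y}) = {G'({x,y})}. Then there exists a bijection g : X → X such that G'({x,y}) = {g(x), g(y)} for every two-element subset {x,y} of X; moreover, for each x ∈ X, g(x) is the unique point of X belonging to G'({x,y}) for every y ∈ X with y ≠ x. -/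
set_option linter.unusedSectionVars false
set_option maxHeartbeats 1000000

open Set Metric Filter Topology

section Helpers

variable {X : Type*} [TopologicalSpace X] [CompactSpace X] [T2Space X]

/-- distance bound by diameter of range -/
lemma abs_sub_le_diam (f : C(X, ℂ)) (a b : X) :
    ‖f a - f b‖ ≤ Metric.diam (Set.range ⇑f) := by
  have hb : Bornology.IsBounded (Set.range ⇑f) :=
    (isCompact_range f.continuous).isBounded
  have := Metric.dist_le_diam_of_mem hb (mem_range_self a) (mem_range_self b)
  rwa [Complex.dist_eq] at this

lemma diam_range_le (f : C(X, ℂ)) {C : ℝ} (h0 : 0 ≤ C)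
    (h : ∀ a b : X, ‖f a - f b‖ ≤ C) :
    Metric.diam (Set.range ⇑f) ≤ C := by
  apply Metric.diam_le_of_forall_dist_le h0
  rintro _ ⟨a, rfl⟩ _ ⟨b, rfl⟩
  rw [Complex.dist_eq]; exact h a b

/-- real to complex continuous map -/
noncomputable def toC (u : C(X, ℝ)) : C(X, ℂ) :=
  ContinuousMap.comp ⟨Complex.ofReal, Complex.continuous_ofReal⟩ u

@[simp] lemma toC_apply (u : C(X, ℝ)) (a : X) : toC u a = (u a : ℂ) := rfl

/-- test functions: 1 at a point, 0 on a finite set -/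
lemma exists_test (a : X) (F : Set X) (hF : F.Finite) (ha : a ∉ F) :
    ∃ H : C(X, ℂ), H a = 1 ∧ ∀ b ∈ F, H b = 0 := by
  obtain ⟨f, hf0, hf1, -⟩ := exists_continuous_zero_one_of_isClosed
    (hF.isClosed) (isClosed_singleton (x := a))
    (by rw [Set.disjoint_right]; simpa using ha)
  exact ⟨toC f, by simp [hf1 rfl], fun b hb => by simp [hf0 hb]⟩


/-- peak function: 1 exactly (only) at x, vanishing on a closed set C. -/
lemma exists_peak [FirstCountableTopology X] (x : X) (C : Set X)
    (hC : IsClosed C) (hx : x ∉ C) :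
    ∃ u : C(X, ℝ), (∀ a, 0 ≤ u a) ∧ (∀ a, u a ≤ 1) ∧ u x = 1 ∧
      (∀ a, u a = 1 → a = x) ∧ (∀ a ∈ C, u a = 0) := by
  obtain ⟨U, hU⟩ := (𝓝 x).exists_antitone_basis
  -- open neighborhoods
  have hxU : ∀ n, x ∈ interior (U n) := fun n => mem_interior_iff_mem_nhds.2 (hU.mem n)
  -- Urysohn functions
  have hv : ∀ n : ℕ, ∃ v : C(X, ℝ), Set.EqOn v 0 ((interior (U n))ᶜ ∪ C) ∧
      Set.EqOn v 1 {x} ∧ ∀ a, v a ∈ Set.Icc (0:ℝ) 1 := by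
    intro n
    apply exists_continuous_zero_one_of_isClosed
      ((isOpen_interior.isClosed_compl).union hC) isClosed_singleton
    rw [Set.disjoint_right]
    rintro a rfl
    simp [hxU n, hx]
  choose v hv0 hv1 hv01 using hv
  have hvnorm : ∀ n : ℕ, ‖(2⁻¹:ℝ)^(n+1) • v n‖ ≤ (2⁻¹:ℝ)^(n+1) := by
    intro n
    rw [norm_smul _ (v n)]
    have : ‖v n‖ ≤ 1 := by
      rw [ContinuousMap.norm_le _ zero_le_one]
      intro a
      rw [Real.norm_eq_abs, abs_le]
      exact ⟨by linarith [(hv01 n a).1], (hv01 n a).2⟩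
    calc ‖(2⁻¹:ℝ)^(n+1)‖ * ‖v n‖ ≤ ‖(2⁻¹:ℝ)^(n+1)‖ * 1 := by
          exact mul_le_mul_of_nonneg_left this (norm_nonneg _)
      _ = (2⁻¹:ℝ)^(n+1) := by
          rw [mul_one, Real.norm_eq_abs, abs_of_nonneg (by positivity)]
  have hgeo : Summable (fun n : ℕ => (2⁻¹:ℝ)^(n+1)) := by
    have := (summable_geometric_two).mul_right (2⁻¹:ℝ)
    refine this.congr fun n => ?_
    rw [one_div, pow_succ]
  have hsum : Summable (fun n : ℕ => (2⁻¹:ℝ)^(n+1) • v n) :=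
    Summable.of_norm_bounded hgeo hvnorm
  set u : C(X, ℝ) := ∑' n : ℕ, (2⁻¹:ℝ)^(n+1) • v n with hu
  have heval : ∀ a : X, u a = ∑' n : ℕ, (2⁻¹:ℝ)^(n+1) * v n a := by
    intro a
    have := (ContinuousMap.evalCLM ℝ a).map_tsum hsum
    simpa [ContinuousMap.evalCLM, hu] using this
  have hsa : ∀ a : X, Summable (fun n : ℕ => (2⁻¹:ℝ)^(n+1) * v n a) := by
    intro a
    apply Summable.of_norm_bounded hgeo
    intro n
    rw [Real.norm_eq_abs, abs_mul, abs_of_nonneg (by positivity : (0:ℝ) ≤ (2⁻¹:ℝ)^(n+1))]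
    have h1 := (hv01 n a).1; have h2 := (hv01 n a).2
    nlinarith [abs_of_nonneg h1, pow_pos (by norm_num : (0:ℝ) < 2⁻¹) (n+1)]
  have htot : ∑' n : ℕ, (2⁻¹:ℝ)^(n+1) = 1 := by
    have h2 : ∑' n : ℕ, ((1:ℝ)/2)^n = 2 := tsum_geometric_two
    have : ∑' n : ℕ, (2⁻¹:ℝ)^(n+1) = ∑' n : ℕ, ((1:ℝ)/2)^n * 2⁻¹ := by
      congr 1; funext n; rw [one_div, pow_succ]
    rw [this, tsum_mul_right, h2]; norm_num
  refine ⟨u, ?_, ?_, ?_, ?_, ?_⟩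
  · intro a
    rw [heval]
    exact tsum_nonneg fun n => mul_nonneg (by positivity) ((hv01 n a).1)
  · intro a
    rw [heval, ← htot]
    refine Summable.tsum_le_tsum (fun n => ?_) (hsa a) hgeo
    have h2 := (hv01 n a).2
    nlinarith [pow_pos (by norm_num : (0:ℝ) < 2⁻¹) (n+1)]
  · rw [heval, ← htot]
    congr 1; funext n
    rw [hv1 n rfl]; simp
  · intro a ha
    have hva : ∀ n, v n a = 1 := by
      intro n
      by_contra hne
      have hlt : v n a < 1 := lt_of_le_of_ne (hv01 n a).2 hne
      have hsub : Summable (fun m : ℕ => (2⁻¹:ℝ)^(m+1) * (1 - v m a)) := by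
        refine (hgeo.sub (hsa a)).congr fun m => ?_
        ring
      have hle := Summable.le_tsum hsub n (fun m _ => by
        have := (hv01 m a).2
        nlinarith [pow_pos (by norm_num : (0:ℝ) < 2⁻¹) (m+1)])
      have hzero : ∑' m : ℕ, (2⁻¹:ℝ)^(m+1) * (1 - v m a) = 0 := by
        have : (fun m : ℕ => (2⁻¹:ℝ)^(m+1) * (1 - v m a))
            = fun m : ℕ => (2⁻¹:ℝ)^(m+1) - (2⁻¹:ℝ)^(m+1) * v m a := by
          funext m; ring
        rw [this, Summable.tsum_sub hgeo (hsa a), htot, ← heval, ha]; ring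
      have hpos : (0:ℝ) < (2⁻¹:ℝ)^(n+1) * (1 - v n a) := by
        have := pow_pos (by norm_num : (0:ℝ) < 2⁻¹) (n+1); nlinarith
      rw [hzero] at hle; linarith
    -- now a ∈ U n for all n
    by_contra hax
    have : {a}ᶜ ∈ 𝓝 x := by
      refine (isOpen_compl_singleton).mem_nhds ?_
      simp only [Set.mem_compl_iff, Set.mem_singleton_iff]
      exact fun h => hax h.symm
    obtain ⟨n, hn⟩ := hU.mem_iff.1 this
    have haU : a ∈ interior (U n) := by
      by_contra h
      have := hv0 n (Or.inl h)
      rw [hva n] at this; simp at this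
    exact (hn (interior_subset haU)) rfl
  · intro a haC
    rw [heval]
    have : ∀ n : ℕ, (2⁻¹:ℝ)^(n+1) * v n a = 0 := by
      intro n; rw [hv0 n (Or.inr haC)]; simp
    rw [tsum_congr this, tsum_zero]


/-- complex algebra: |A| = |A+tB| = |A+2tB| = 2 with t>0 forces B = 0 -/
lemma three_point_abs {A B : ℂ} {t : ℝ} (ht : 0 < t)
    (h0 : ‖A‖ = 2) (h1 : ‖A + t * B‖ = 2)
    (h2 : ‖A + ((2 * t : ℝ) : ℂ) * B‖ = 2) : B = 0 := by
  have e0 : Complex.normSq A = 4 := by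
    have := congrArg (· ^ 2) h0
    simp only [Complex.sq_norm] at this; rw [this]; norm_num
  have e1 : Complex.normSq (A + t * B) = 4 := by
    have := congrArg (· ^ 2) h1
    simp only [Complex.sq_norm] at this; rw [this]; norm_num
  have e2 : Complex.normSq (A + ((2 * t : ℝ) : ℂ) * B) = 4 := by
    have := congrArg (· ^ 2) h2
    simp only [Complex.sq_norm] at this; rw [this]; norm_num
  simp only [Complex.normSq_apply, Complex.add_re, Complex.add_im, Complex.mul_re,
    Complex.mul_im, Complex.ofReal_re, Complex.ofReal_im] at e0 e1 e2
  have key : 2 * t ^ 2 * (B.re ^ 2 + B.im ^ 2) = 0 := by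
    linear_combination e0 + e2 - 2 * e1
  have hB : B.re ^ 2 + B.im ^ 2 = 0 := by
    have h2t : (2:ℝ) * t ^ 2 ≠ 0 := by positivity
    exact (mul_eq_zero.mp key).resolve_left h2t
  have hre : B.re = 0 := by nlinarith [sq_nonneg B.re, sq_nonneg B.im]
  have him : B.im = 0 := by nlinarith [sq_nonneg B.re, sq_nonneg B.im]
  exact Complex.ext hre him

lemma lemmaR [FirstCountableTopology X]
    (φ : C(X, ℂ) →ₗ[ℂ] C(X, ℂ)) (hdp : DiamPreserving (⇑φ))
    (G' : TwoSet X → TwoSet X)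
    (hG' : ∀ p : TwoSet X, Gset (⇑φ) p.val = {(G' p).val})
    {x y : X} (hxy : x ≠ y) :
    ∃ p q : X, ∃ τ : ℂ, p ≠ q ∧ (G' ⟨{x, y}, x, y, hxy, rfl⟩).val = {p, q} ∧
      τ ≠ 0 ∧ ∀ h : C(X, ℂ), φ h p - φ h q = τ * (h x - h y) := by
  classical
  set s : TwoSet X := ⟨{x, y}, x, y, hxy, rfl⟩ with hs
  obtain ⟨p, q, hpq, hval⟩ := (G' s).property
  -- P1
  have hP1 : ∀ f : C(X, ℂ), ({x, y} : Set X) ∈ diamSet f →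
      (G' s).val ∈ diamSet (φ f) := by
    intro f hf
    have : (G' s).val ∈ Gset (⇑φ) s.val := by rw [hG' s]; rfl
    exact this f hf
  -- peak functions
  obtain ⟨ux, hux0, hux1, huxx, huxpk, huxC⟩ :=
    exists_peak x ({y} : Set X) isClosed_singleton (by simpa using hxy)
  obtain ⟨uy, huy0, huy1, huyy, huypk, huyC⟩ :=
    exists_peak y ({x} : Set X) isClosed_singleton (by simpa using hxy.symm)
  have huxy : ux y = 0 := huxC y rfl
  have huyx : uy x = 0 := huyC x rfl
  set f₀ : C(X, ℂ) := toC ux - toC uy with hf₀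
  have hf₀app : ∀ a, f₀ a = ((ux a - uy a : ℝ) : ℂ) := by
    intro a; simp [hf₀]
  have hf₀x : f₀ x = 1 := by rw [hf₀app]; rw [huxx, huyx]; norm_num
  have hf₀y : f₀ y = -1 := by rw [hf₀app]; rw [huxy, huyy]; norm_num
  have hf₀bd : ∀ a, ‖f₀ a‖ ≤ 1 := by
    intro a
    rw [hf₀app, Complex.norm_real, Real.norm_eq_abs, abs_le]
    constructor
    · have := hux0 a; have := huy1 a; linarith
    · have := hux1 a; have := huy0 a; linarith
  -- D
  set D : C(X, ℂ) → ℂ := fun h => φ h p - φ h q with hD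
  have hDadd : ∀ f g : C(X, ℂ), D (f + g) = D f + D g := by
    intro f g; simp only [hD, map_add, ContinuousMap.add_apply]; ring
  have hDsmul : ∀ (c : ℂ) (f : C(X, ℂ)), D (c • f) = c * D f := by
    intro c f; simp only [hD, map_smul, ContinuousMap.smul_apply, smul_eq_mul]; ring
  -- membership criterion
  have mem_S : ∀ F : C(X, ℂ), (∀ a b, ‖F a - F b‖ ≤ 2) →
      ‖F x - F y‖ = 2 → ({x, y} : Set X) ∈ diamSet F := by
    intro F hbd hval2
    have hd1 : Metric.diam (Set.range ⇑F) ≤ 2 := diam_range_le F (by norm_num) hbd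
    have hd2 : (2:ℝ) ≤ Metric.diam (Set.range ⇑F) := hval2 ▸ abs_sub_le_diam F x y
    exact ⟨x, y, hxy, rfl, by rw [hval2]; linarith⟩
  have diam_eq : ∀ F : C(X, ℂ), (∀ a b, ‖F a - F b‖ ≤ 2) →
      ‖F x - F y‖ = 2 → Metric.diam (Set.range ⇑F) = 2 := by
    intro F hbd hval2
    have hd1 : Metric.diam (Set.range ⇑F) ≤ 2 := diam_range_le F (by norm_num) hbd
    have hd2 : (2:ℝ) ≤ Metric.diam (Set.range ⇑F) := hval2 ▸ abs_sub_le_diam F x y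
    linarith
  -- |D F| = diam (range F) whenever {x,y} ∈ S(F)
  have hSD : ∀ F : C(X, ℂ), ({x, y} : Set X) ∈ diamSet F →
      ‖D F‖ = Metric.diam (Set.range ⇑F) := by
    intro F hF
    obtain ⟨x', y', hx'y', heq, habs⟩ := hP1 F hF
    rw [hval] at heq
    rw [← hdp F, ← habs]
    rcases (Set.pair_eq_pair_iff.mp heq) with ⟨h1, h2⟩ | ⟨h1, h2⟩
    · rw [hD, h1, h2]
    · rw [hD, h1, h2]; exact norm_sub_rev _ _
  -- step (a)
  have stepA : ∀ (h : C(X, ℂ)) (W : Set X), IsOpen W → x ∈ W → y ∈ W →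
      (∀ a ∈ W, h a = 0) → D h = 0 := by
    intro h W hWopen hxW hyW hvan
    -- find δ
    have claim : ∀ u : C(X, ℝ), (∀ a, u a ≤ 1) → (∀ a, u a = 1 → a ∈ W) →
        ∃ δ : ℝ, 0 < δ ∧ ∀ a, 1 - δ ≤ u a → a ∈ W := by
      intro u hu1 hupk
      by_contra hcon
      push_neg at hcon
      have hK : ∀ n : ℕ, ∃ a, 1 - 1/(n+1) ≤ u a ∧ a ∉ W := by
        intro n
        obtain ⟨a, ha1, ha2⟩ := hcon (1/(n+1)) (by positivity)
        exact ⟨a, ha1, ha2⟩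
      set K : ℕ → Set X := fun n => {a | 1 - 1/(n+1) ≤ u a} ∩ Wᶜ with hKdef
      have hKclosed : ∀ n, IsClosed (K n) := by
        intro n
        exact ((isClosed_le continuous_const u.continuous)).inter hWopen.isClosed_compl
      have hKne : ∀ n, (K n).Nonempty := by
        intro n; obtain ⟨a, h1, h2⟩ := hK n; exact ⟨a, h1, h2⟩
      have hKanti : Antitone K := by
        intro m n hmn
        apply Set.inter_subset_inter_left
        intro a ha
        simp only [Set.mem_setOf_eq] at ha ⊢
        have hle : (1:ℝ)/(n+1) ≤ 1/(m+1) := by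
          apply one_div_le_one_div_of_le (by positivity)
          have : (m:ℝ) ≤ n := Nat.cast_le.mpr hmn
          linarith
        linarith
      have hne := IsCompact.nonempty_iInter_of_directed_nonempty_isCompact_isClosed K
        (hKanti.directed_ge) hKne (fun n => (hKclosed n).isCompact) hKclosed
      obtain ⟨a, ha⟩ := hne
      have haW : a ∉ W := (Set.mem_iInter.mp ha 0).2
      have hua : u a = 1 := by
        have hge : ∀ n : ℕ, 1 - 1/(n+1) ≤ u a := fun n => (Set.mem_iInter.mp ha n).1
        by_contra hne'
        have hlt : u a < 1 := lt_of_le_of_ne (hu1 a) hne'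
        obtain ⟨n, hn⟩ := exists_nat_one_div_lt (by linarith : (0:ℝ) < 1 - u a)
        have := hge n
        linarith
      exact haW (hupk a hua)
    obtain ⟨δ₁, hδ₁, hKx⟩ := claim ux hux1 (fun a ha => (huxpk a ha) ▸ hxW)
    obtain ⟨δ₂, hδ₂, hKy⟩ := claim uy huy1 (fun a ha => (huypk a ha) ▸ hyW)
    set δ : ℝ := min δ₁ δ₂ with hδdef
    have hδ : 0 < δ := lt_min hδ₁ hδ₂
    set M : ℝ := ‖h‖ + 1 with hM
    have hM0 : 0 < M := by positivity
    have hhbd : ∀ a, ‖h a‖ ≤ M := by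
      intro a
      have := h.norm_coe_le_norm a
      rw [hM]; calc ‖h a‖ = ‖h a‖ := rfl
        _ ≤ ‖h‖ := this
        _ ≤ ‖h‖ + 1 := by linarith
    set t : ℝ := δ / (8 * M) with htdef
    have ht : 0 < t := by positivity
    -- main bound : for 0 ≤ lam ≤ 2t, F := f₀ + lam • h has the pair property
    have main : ∀ lam : ℝ, 0 ≤ lam → lam ≤ 2 * t →
        ‖D f₀ + (lam:ℂ) * D h‖ = 2 := by
      intro lam hlam0 hlam1
      set F : C(X, ℂ) := f₀ + (lam:ℂ) • h with hF
      have hFapp : ∀ a, F a = f₀ a + lam * h a := by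
        intro a; simp [hF]
      have hKprop : ∀ a : X, (1 - δ ≤ ux a ∨ 1 - δ ≤ uy a) → h a = 0 := by
        rintro a (ha | ha)
        · exact hvan a (hKx a (by have : δ ≤ δ₁ := min_le_left _ _; linarith))
        · exact hvan a (hKy a (by have : δ ≤ δ₂ := min_le_right _ _; linarith))
      have hsmall : ∀ a : X, ¬(1 - δ ≤ ux a ∨ 1 - δ ≤ uy a) →
          ‖f₀ a‖ ≤ 1 - δ := by
        intro a ha
        push_neg at ha
        rw [hf₀app, Complex.norm_real, Real.norm_eq_abs, abs_le]
        constructor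
        · have := hux0 a; linarith [ha.2]
        · have := huy0 a; linarith [ha.1]
      have hlamM : lam * M ≤ δ / 4 := by
        calc lam * M ≤ (2 * t) * M := by nlinarith
          _ = δ / 4 := by rw [htdef]; field_simp; ring
      have hFbd : ∀ a b, ‖F a - F b‖ ≤ 2 := by
        intro a b
        by_cases haK : 1 - δ ≤ ux a ∨ 1 - δ ≤ uy a <;>
          by_cases hbK : 1 - δ ≤ ux b ∨ 1 - δ ≤ uy b
        · rw [hFapp, hFapp, hKprop a haK, hKprop b hbK]
          simp only [mul_zero, add_zero]
          calc ‖f₀ a - f₀ b‖ ≤ ‖f₀ a‖ + ‖f₀ b‖ :=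
                norm_sub_le _ _
            _ ≤ 2 := by linarith [hf₀bd a, hf₀bd b]
        · rw [hFapp, hFapp, hKprop a haK]
          simp only [mul_zero, add_zero]
          have : ‖f₀ a - (f₀ b + lam * h b)‖ ≤
              ‖f₀ a‖ + (‖f₀ b‖ + lam * ‖h b‖) := by
            calc ‖f₀ a - (f₀ b + lam * h b)‖ ≤
                ‖f₀ a‖ + ‖f₀ b + lam * h b‖ :=
                  norm_sub_le _ _
              _ ≤ _ := by
                  have := norm_add_le (f₀ b) ((lam:ℂ) * h b)
                  have he : ‖(lam:ℂ) * h b‖ = lam * ‖h b‖ := by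
                    rw [norm_mul, Complex.norm_real, Real.norm_eq_abs, abs_of_nonneg hlam0]
                  linarith
          have h1 := hf₀bd a
          have h2 := hsmall b hbK
          have h3 : lam * ‖h b‖ ≤ δ / 4 := by
            have := hhbd b
            nlinarith
          have hδ4 : δ / 4 ≤ δ := by linarith
          linarith
        · rw [hFapp, hFapp, hKprop b hbK]
          simp only [mul_zero, add_zero]
          have : ‖f₀ a + lam * h a - f₀ b‖ ≤
              (‖f₀ a‖ + lam * ‖h a‖) + ‖f₀ b‖ := by
            calc ‖f₀ a + lam * h a - f₀ b‖ ≤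
                ‖f₀ a + lam * h a‖ + ‖f₀ b‖ :=
                  norm_sub_le _ _
              _ ≤ _ := by
                  have := norm_add_le (f₀ a) ((lam:ℂ) * h a)
                  have he : ‖(lam:ℂ) * h a‖ = lam * ‖h a‖ := by
                    rw [norm_mul, Complex.norm_real, Real.norm_eq_abs, abs_of_nonneg hlam0]
                  linarith
          have h1 := hf₀bd b
          have h2 := hsmall a haK
          have h3 : lam * ‖h a‖ ≤ δ / 4 := by
            have := hhbd a
            nlinarith
          linarith
        · rw [hFapp, hFapp]
          have : ‖f₀ a + lam * h a - (f₀ b + lam * h b)‖ ≤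
              ‖f₀ a‖ + lam * ‖h a‖ +
              (‖f₀ b‖ + lam * ‖h b‖) := by
            have e1 := norm_sub_le
              (f₀ a + (lam:ℂ) * h a) (f₀ b + (lam:ℂ) * h b)
            have e2 := norm_add_le (f₀ a) ((lam:ℂ) * h a)
            have e3 := norm_add_le (f₀ b) ((lam:ℂ) * h b)
            have he : ∀ z : ℂ, ‖(lam:ℂ) * z‖ = lam * ‖z‖ := by
              intro z; rw [norm_mul, Complex.norm_real, Real.norm_eq_abs, abs_of_nonneg hlam0]
            rw [he (h a)] at e2; rw [he (h b)] at e3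
            linarith
          have h2a := hsmall a haK
          have h2b := hsmall b hbK
          have h3a : lam * ‖h a‖ ≤ δ / 4 := by
            have := hhbd a; nlinarith
          have h3b : lam * ‖h b‖ ≤ δ / 4 := by
            have := hhbd b; nlinarith
          linarith
      have hFxy : ‖F x - F y‖ = 2 := by
        have hhx : h x = 0 := hvan x hxW
        have hhy : h y = 0 := hvan y hyW
        rw [hFapp, hFapp, hhx, hhy, hf₀x, hf₀y]
        norm_num
      have hmem := mem_S F hFbd hFxy
      have habs := hSD F hmem
      rw [diam_eq F hFbd hFxy] at habs
      have hDF : D F = D f₀ + (lam:ℂ) * D h := by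
        rw [hF, hDadd, hDsmul]
      rw [hDF] at habs
      exact habs
    have h0 := main 0 le_rfl (by linarith)
    have h1 := main t (le_of_lt ht) (by linarith)
    have h2 := main (2*t) (by linarith) le_rfl
    simp only [Complex.ofReal_zero, zero_mul, add_zero] at h0
    have := three_point_abs ht h0 h1 (by exact_mod_cast h2)
    exact this
  -- step (b)
  have stepB : ∀ h : C(X, ℂ), h x = 0 → h y = 0 → D h = 0 := by
    intro h hhx hhy
    have hbound : ∀ ε : ℝ, 0 < ε → ‖D h‖ ≤ 2 * ε := by
      intro ε hε
      set V : Set X := {a | ‖h a‖ < ε} with hV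
      have hVopen : IsOpen V := by
        have : Continuous fun a => ‖h a‖ := continuous_norm.comp h.continuous
        exact isOpen_lt this continuous_const
      have hxV : x ∈ V := by simp [hV, hhx, hε]
      have hyV : y ∈ V := by simp [hV, hhy, hε]
      -- first Urysohn
      obtain ⟨w₁, hw₁0, hw₁1, hw₁01⟩ := exists_continuous_zero_one_of_isClosed
        (hVopen.isClosed_compl) (((Set.finite_singleton y).insert x).isClosed)
        (by rw [Set.disjoint_left]; intro a ha ha'
            rcases ha' with rfl | ha'
            · exact ha hxV
            · rw [Set.mem_singleton_iff] at ha'; subst ha'; exact ha hyV)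
      obtain ⟨w₂, hw₂0, hw₂1, hw₂01⟩ := exists_continuous_zero_one_of_isClosed
        (hVopen.isClosed_compl) (isClosed_le continuous_const w₁.continuous :
          IsClosed {a | (1:ℝ)/2 ≤ w₁ a})
        (by rw [Set.disjoint_left]; intro a ha ha'
            have := hw₁0 ha
            simp only [Set.mem_setOf_eq] at ha'
            rw [Pi.zero_apply] at this
            rw [this] at ha'; linarith)
      set g₁ : C(X, ℂ) := toC w₂ * h with hg₁
      set g₂ : C(X, ℂ) := h - g₁ with hg₂
      have hg₂van : ∀ a ∈ {a | (1:ℝ)/2 < w₁ a}, g₂ a = 0 := by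
        intro a ha
        simp only [Set.mem_setOf_eq] at ha
        have : w₂ a = 1 := hw₂1 (by simp only [Set.mem_setOf_eq]; linarith)
        simp [hg₂, hg₁, this]
      have hDg₂ : D g₂ = 0 := by
        apply stepA g₂ {a | (1:ℝ)/2 < w₁ a} (isOpen_lt continuous_const w₁.continuous)
        · have hx1 : w₁ x = 1 := hw₁1 (by simp)
          show (1:ℝ)/2 < w₁ x
          rw [hx1]; norm_num
        · have hy1 : w₁ y = 1 := hw₁1 (by simp)
          show (1:ℝ)/2 < w₁ y
          rw [hy1]; norm_num
        · exact hg₂van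
      have hg₁bd : ∀ a, ‖g₁ a‖ ≤ ε := by
        intro a
        by_cases haV : a ∈ V
        · simp only [hg₁, ContinuousMap.mul_apply, toC_apply, norm_mul, Complex.norm_real, Real.norm_eq_abs]
          have h1 : |w₂ a| ≤ 1 := by
            rw [abs_le]; exact ⟨by linarith [(hw₂01 a).1], (hw₂01 a).2⟩
          have h2 : ‖h a‖ < ε := haV
          nlinarith [norm_nonneg (h a), abs_nonneg (w₂ a)]
        · have : w₂ a = 0 := hw₂0 haV
          simp [hg₁, this, hε.le]
      have hDg₁ : ‖D g₁‖ ≤ 2 * ε := by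
        have hb : ∀ a b, ‖g₁ a - g₁ b‖ ≤ 2 * ε := by
          intro a b
          calc ‖g₁ a - g₁ b‖ ≤ ‖g₁ a‖ + ‖g₁ b‖ :=
              norm_sub_le _ _
            _ ≤ 2 * ε := by linarith [hg₁bd a, hg₁bd b]
        calc ‖D g₁‖ ≤ Metric.diam (Set.range ⇑(φ g₁)) := by
              rw [hD]; exact abs_sub_le_diam _ p q
          _ = Metric.diam (Set.range ⇑g₁) := hdp g₁
          _ ≤ 2 * ε := diam_range_le g₁ (by positivity) hb
      have hsplit : D h = D g₁ + D g₂ := by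
        have : h = g₁ + g₂ := by rw [hg₂]; ring
        rw [this, hDadd]
      rw [hsplit, hDg₂, add_zero]
      exact hDg₁
    have : ‖D h‖ = 0 := by
      by_contra hne
      have hpos : 0 < ‖D h‖ :=
        lt_of_le_of_ne (norm_nonneg _) (Ne.symm hne)
      have := hbound (‖D h‖ / 4) (by linarith)
      linarith
    exact norm_eq_zero.mp this
  -- constants
  have hDconst : ∀ c : ℂ, D ((ContinuousMap.const X c)) = 0 := by
    intro c
    have hsub : (Set.range ⇑(ContinuousMap.const X c)).Subsingleton := by
      rintro _ ⟨a, rfl⟩ _ ⟨b, rfl⟩; rfl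
    have h0 : Metric.diam (Set.range ⇑(φ (ContinuousMap.const X c))) = 0 := by
      rw [hdp, Metric.diam_subsingleton hsub]
    have := abs_sub_le_diam (φ (ContinuousMap.const X c)) p q
    rw [h0] at this
    have habs : ‖D (ContinuousMap.const X c)‖ = 0 :=
      le_antisymm this (norm_nonneg _)
    exact norm_eq_zero.mp habs
  -- final computation
  set α : ℂ := D (toC ux) with hα
  have hconst1 : D (ContinuousMap.const X 1) = 0 := hDconst 1
  have hβ : D (toC uy) = -α := by
    have h1 : D (toC ux + toC uy - ContinuousMap.const X 1) = 0 := by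
      apply stepB
      · simp [huxx, huyx]
      · simp [huxy, huyy]
    have e : toC ux + toC uy - ContinuousMap.const X 1
        = toC ux + (toC uy + (-1 : ℂ) • ContinuousMap.const X 1) := by
      ext a; simp; ring
    rw [e, hDadd, hDadd, hDsmul, hconst1, ← hα] at h1
    linear_combination h1
  have hgen : ∀ h : C(X, ℂ), D h = α * (h x - h y) := by
    intro h
    have h' : D (h - h x • toC ux - h y • toC uy) = 0 := by
      apply stepB
      · simp [huxx, huyx]
      · simp [huxy, huyy]
    have e : h - h x • toC ux - h y • toC uy
        = h + ((-(h x)) • toC ux + (-(h y)) • toC uy) := by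
      ext a; simp; ring
    rw [e, hDadd, hDadd, hDsmul, hDsmul, ← hα, hβ] at h'
    linear_combination h'
  have hf₀bd2 : ∀ a b, ‖f₀ a - f₀ b‖ ≤ 2 := by
    intro a b
    calc ‖f₀ a - f₀ b‖ ≤ ‖f₀ a‖ + ‖f₀ b‖ :=
        norm_sub_le _ _
      _ ≤ 2 := by linarith [hf₀bd a, hf₀bd b]
  have hf₀xy : ‖f₀ x - f₀ y‖ = 2 := by
    rw [hf₀x, hf₀y]; norm_num
  have hf₀mem : ({x, y} : Set X) ∈ diamSet f₀ := mem_S f₀ hf₀bd2 hf₀xy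
  have habs2 : ‖D f₀‖ = 2 := by
    rw [hSD f₀ hf₀mem, diam_eq f₀ hf₀bd2 hf₀xy]
  have hDf₀ : D f₀ = α * 2 := by
    rw [hgen f₀, hf₀x, hf₀y]; ring
  have hα0 : α ≠ 0 := by
    intro h0
    rw [hDf₀, h0] at habs2
    simp at habs2
  exact ⟨p, q, α, hpq, hval, hα0, fun h => hgen h⟩


lemma pair_eq_of_mem {a b c d : X} (hab : a ≠ b) (ha : a ∈ ({c, d} : Set X))
    (hb : b ∈ ({c, d} : Set X)) : ({c, d} : Set X) = {a, b} := by
  rcases ha with rfl | ha <;> rcases hb with rfl | hb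
  · exact absurd rfl hab
  · rw [Set.mem_singleton_iff] at hb; subst hb; rfl
  · rw [Set.mem_singleton_iff] at ha; subst ha; exact Set.pair_comm _ _
  · rw [Set.mem_singleton_iff] at ha hb; subst ha; subst hb; exact absurd rfl hab

lemma not_isolated (c₁ c₂ c₃ : ℂ) (h₁ : c₁ ≠ 0) (p q r w m n : X) (hpq : p ≠ q)
    (key : ∀ H : C(X, ℂ), c₁ * (H p - H q) + c₂ * (H r - H w) + c₃ * (H m - H n) = 0) :
    p = r ∨ p = w ∨ p = m ∨ p = n := by
  by_contra hcon
  push_neg at hcon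
  obtain ⟨h1, h2, h3, h4⟩ := hcon
  obtain ⟨H, hHa, hH0⟩ := exists_test p ({q, r, w, m, n} : Set X)
    (Set.toFinite _)
    (by simp only [Set.mem_insert_iff, Set.mem_singleton_iff]
        push_neg
        exact ⟨hpq, h1, h2, h3, h4⟩)
  have := key H
  rw [hHa, hH0 q (by simp), hH0 r (by simp), hH0 w (by simp),
    hH0 m (by simp), hH0 n (by simp)] at this
  simp at this
  exact h₁ this

lemma lemmaT [FirstCountableTopology X]
    (φ : C(X, ℂ) →ₗ[ℂ] C(X, ℂ)) (hbij : Function.Bijective φ)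
    (hdp : DiamPreserving (⇑φ))
    (G' : TwoSet X → TwoSet X) (hG'inj : Function.Injective G')
    (hG' : ∀ p : TwoSet X, Gset (⇑φ) p.val = {(G' p).val})
    {x y z : X} (hxy : x ≠ y) (hxz : x ≠ z) (hyz : y ≠ z) :
    ∃ P Q R : X, P ≠ Q ∧ P ≠ R ∧ Q ≠ R ∧
      (G' ⟨{x, y}, x, y, hxy, rfl⟩).val = {P, Q} ∧
      (G' ⟨{x, z}, x, z, hxz, rfl⟩).val = {P, R} ∧
      (G' ⟨{y, z}, y, z, hyz, rfl⟩).val = {Q, R} := by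
  classical
  obtain ⟨p, q, τ₁, hpq, hvalA, hτ₁0, hτ₁⟩ := lemmaR φ hdp G' hG' hxy
  obtain ⟨r, w, τ₂, hrw, hvalB, hτ₂0, hτ₂⟩ := lemmaR φ hdp G' hG' hxz
  obtain ⟨m, n, τ₃, hmn, hvalC, hτ₃0, hτ₃⟩ := lemmaR φ hdp G' hG' hyz
  -- the three input sets are distinct
  have hsAB : (⟨{x, y}, x, y, hxy, rfl⟩ : TwoSet X) ≠ ⟨{x, z}, x, z, hxz, rfl⟩ := by
    intro h
    have h' : ({x, y} : Set X) = {x, z} := congrArg Subtype.val h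
    have hz : z ∈ ({x, y} : Set X) := h' ▸ (by simp)
    rcases hz with hz | hz
    · exact hxz hz.symm
    · rw [Set.mem_singleton_iff] at hz; exact hyz hz.symm
  have hsAC : (⟨{x, y}, x, y, hxy, rfl⟩ : TwoSet X) ≠ ⟨{y, z}, y, z, hyz, rfl⟩ := by
    intro h
    have h' : ({x, y} : Set X) = {y, z} := congrArg Subtype.val h
    have hz : z ∈ ({x, y} : Set X) := h' ▸ (by simp)
    rcases hz with hz | hz
    · exact hxz hz.symm
    · rw [Set.mem_singleton_iff] at hz; exact hyz hz.symm
  have hsBC : (⟨{x, z}, x, z, hxz, rfl⟩ : TwoSet X) ≠ ⟨{y, z}, y, z, hyz, rfl⟩ := by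
    intro h
    have h' : ({x, z} : Set X) = {y, z} := congrArg Subtype.val h
    have hy : y ∈ ({x, z} : Set X) := h' ▸ (by simp)
    rcases hy with hy | hy
    · exact hxy hy.symm
    · rw [Set.mem_singleton_iff] at hy; exact hyz hy
  have hAB : ({p, q} : Set X) ≠ {r, w} := by
    intro h
    apply hsAB
    apply hG'inj
    apply Subtype.ext
    rw [hvalA, hvalB]; exact h
  have hAC : ({p, q} : Set X) ≠ {m, n} := by
    intro h
    apply hsAC
    apply hG'inj
    apply Subtype.ext
    rw [hvalA, hvalC]; exact h
  have hBC : ({r, w} : Set X) ≠ {m, n} := by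
    intro h
    apply hsBC
    apply hG'inj
    apply Subtype.ext
    rw [hvalB, hvalC]; exact h
  -- the key functional identity
  have key : ∀ H : C(X, ℂ),
      (τ₂ * τ₃) * (H p - H q) + (-(τ₁ * τ₃)) * (H r - H w)
        + (τ₁ * τ₂) * (H m - H n) = 0 := by
    intro H
    obtain ⟨h, rfl⟩ := hbij.2 H
    linear_combination τ₂ * τ₃ * (hτ₁ h) - τ₁ * τ₃ * (hτ₂ h) + τ₁ * τ₂ * (hτ₃ h)
  have hc₁ : (τ₂ * τ₃) ≠ 0 := mul_ne_zero hτ₂0 hτ₃0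
  have hc₂ : (-(τ₁ * τ₃)) ≠ 0 := neg_ne_zero.mpr (mul_ne_zero hτ₁0 hτ₃0)
  have hc₃ : (τ₁ * τ₂) ≠ 0 := mul_ne_zero hτ₁0 hτ₂0
  -- the six "not isolated" facts
  have hp' : p = r ∨ p = w ∨ p = m ∨ p = n :=
    not_isolated (τ₂ * τ₃) (-(τ₁ * τ₃)) (τ₁ * τ₂) hc₁ p q r w m n hpq key
  have hq' : q = r ∨ q = w ∨ q = m ∨ q = n :=
    not_isolated (-(τ₂ * τ₃)) (-(τ₁ * τ₃)) (τ₁ * τ₂) (neg_ne_zero.mpr hc₁)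
      q p r w m n hpq.symm (fun H => by linear_combination key H)
  have hr' : r = p ∨ r = q ∨ r = m ∨ r = n :=
    not_isolated (-(τ₁ * τ₃)) (τ₂ * τ₃) (τ₁ * τ₂) hc₂ r w p q m n hrw
      (fun H => by linear_combination key H)
  have hw' : w = p ∨ w = q ∨ w = m ∨ w = n :=
    not_isolated (τ₁ * τ₃) (τ₂ * τ₃) (τ₁ * τ₂) (fun h => hc₂ (by rw [h, neg_zero]))
      w r p q m n hrw.symm (fun H => by linear_combination key H)
  have hm' : m = p ∨ m = q ∨ m = r ∨ m = w :=
    not_isolated (τ₁ * τ₂) (τ₂ * τ₃) (-(τ₁ * τ₃)) hc₃ m n p q r w hmn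
      (fun H => by linear_combination key H)
  have hn' : n = p ∨ n = q ∨ n = r ∨ n = w :=
    not_isolated (-(τ₁ * τ₂)) (τ₂ * τ₃) (-(τ₁ * τ₃)) (neg_ne_zero.mpr hc₃)
      n m p q r w hmn.symm (fun H => by linear_combination key H)
  -- no point is common to all three pairs
  have no_common : ∀ c, c ∈ ({p, q} : Set X) → c ∈ ({r, w} : Set X) →
      c ∈ ({m, n} : Set X) → False := by
    intro c hcA hcB hcC
    have hother : ∃ d, d ∈ ({p, q} : Set X) ∧ d ≠ c ∧
        (d = r ∨ d = w ∨ d = m ∨ d = n) := by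
      rcases hcA with rfl | hcA
      · exact ⟨q, by simp, hpq.symm, hq'⟩
      · rw [Set.mem_singleton_iff] at hcA; subst hcA
        exact ⟨p, by simp, hpq, hp'⟩
    obtain ⟨d, hdA, hdc, hd⟩ := hother
    have hdc' : d ≠ c := hdc
    have habs : ({p, q} : Set X) = {r, w} ∨ ({p, q} : Set X) = {m, n} := by
      have hAd : ({p, q} : Set X) = {d, c} := by
        rcases hdA with rfl | hdA
        · rcases hcA with rfl | hcA
          · exact absurd rfl hdc'
          · rw [Set.mem_singleton_iff] at hcA; subst hcA; rfl
        · rw [Set.mem_singleton_iff] at hdA; subst hdA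
          rcases hcA with rfl | hcA
          · exact Set.pair_comm _ _
          · rw [Set.mem_singleton_iff] at hcA; subst hcA; exact absurd rfl hdc'
      rcases hd with rfl | rfl | rfl | rfl
      · left; rw [hAd]; exact (pair_eq_of_mem hdc (by simp) hcB).symm
      · left; rw [hAd]; exact (pair_eq_of_mem hdc (by simp) hcB).symm
      · right; rw [hAd]; exact (pair_eq_of_mem hdc (by simp) hcC).symm
      · right; rw [hAd]; exact (pair_eq_of_mem hdc (by simp) hcC).symm
    rcases habs with h | h
    · exact hAB h
    · exact hAC h
  -- common points of pairs of pairs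
  have hPex : ∃ P, P ∈ ({p, q} : Set X) ∧ P ∈ ({r, w} : Set X) := by
    rcases hp' with h | h | h | h
    · exact ⟨p, by simp, by simp [h]⟩
    · exact ⟨p, by simp, by simp [h]⟩
    · rcases hq' with h2 | h2 | h2 | h2
      · exact ⟨q, by simp, by simp [h2]⟩
      · exact ⟨q, by simp, by simp [h2]⟩
      · exact absurd (pair_eq_of_mem hpq (by simp [h]) (by simp [h2])).symm hAC
      · exact absurd (pair_eq_of_mem hpq (by simp [h]) (by simp [h2])).symm hAC
    · rcases hq' with h2 | h2 | h2 | h2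
      · exact ⟨q, by simp, by simp [h2]⟩
      · exact ⟨q, by simp, by simp [h2]⟩
      · exact absurd (pair_eq_of_mem hpq (by simp [h]) (by simp [h2])).symm hAC
      · exact absurd (pair_eq_of_mem hpq (by simp [h]) (by simp [h2])).symm hAC
  have hQex : ∃ Q, Q ∈ ({p, q} : Set X) ∧ Q ∈ ({m, n} : Set X) := by
    rcases hp' with h | h | h | h
    · rcases hq' with h2 | h2 | h2 | h2
      · exact absurd (pair_eq_of_mem hpq (by simp [h]) (by simp [h2])).symm hAB
      · exact absurd (pair_eq_of_mem hpq (by simp [h]) (by simp [h2])).symm hAB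
      · exact ⟨q, by simp, by simp [h2]⟩
      · exact ⟨q, by simp, by simp [h2]⟩
    · rcases hq' with h2 | h2 | h2 | h2
      · exact absurd (pair_eq_of_mem hpq (by simp [h]) (by simp [h2])).symm hAB
      · exact absurd (pair_eq_of_mem hpq (by simp [h]) (by simp [h2])).symm hAB
      · exact ⟨q, by simp, by simp [h2]⟩
      · exact ⟨q, by simp, by simp [h2]⟩
    · exact ⟨p, by simp, by simp [h]⟩
    · exact ⟨p, by simp, by simp [h]⟩
  have hRex : ∃ R, R ∈ ({r, w} : Set X) ∧ R ∈ ({m, n} : Set X) := by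
    rcases hr' with h | h | h | h
    · rcases hw' with h2 | h2 | h2 | h2
      · exact absurd (pair_eq_of_mem hrw (by simp [h]) (by simp [h2])) hAB
      · exact absurd (pair_eq_of_mem hrw (by simp [h]) (by simp [h2])) hAB
      · exact ⟨w, by simp, by simp [h2]⟩
      · exact ⟨w, by simp, by simp [h2]⟩
    · rcases hw' with h2 | h2 | h2 | h2
      · exact absurd (pair_eq_of_mem hrw (by simp [h]) (by simp [h2])) hAB
      · exact absurd (pair_eq_of_mem hrw (by simp [h]) (by simp [h2])) hAB
      · exact ⟨w, by simp, by simp [h2]⟩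
      · exact ⟨w, by simp, by simp [h2]⟩
    · exact ⟨r, by simp, by simp [h]⟩
    · exact ⟨r, by simp, by simp [h]⟩
  obtain ⟨P, hPA, hPB⟩ := hPex
  obtain ⟨Q, hQA, hQC⟩ := hQex
  obtain ⟨R, hRB, hRC⟩ := hRex
  have hPQ : P ≠ Q := by rintro rfl; exact no_common P hPA hPB hQC
  have hPR : P ≠ R := by rintro rfl; exact no_common P hPA hPB hRC
  have hQR : Q ≠ R := by rintro rfl; exact no_common Q hQA hRB hQC
  refine ⟨P, Q, R, hPQ, hPR, hQR, ?_, ?_, ?_⟩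
  · rw [hvalA]; exact pair_eq_of_mem hPQ hPA hQA
  · rw [hvalB]; exact pair_eq_of_mem hPR hPB hRB
  · rw [hvalC]; exact pair_eq_of_mem hQR hQC hRC


end Helpers

/-- Step 7: there is a bijection `g : X → X` with `G'({x,y}) = {g(x), g(y)}` for every
two-element subset `{x,y}`; moreover, `g(x)` is the unique point lying in
`G'({x,y})` for every `y ≠ x`. -/
theorem exists_point_bijection
    {X : Type*} [TopologicalSpace X] [CompactSpace X] [T2Space X]
    [FirstCountableTopology X]
    (h3 : ∃ a b c : X, a ≠ b ∧ a ≠ c ∧ b ≠ c)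
    (φ : C(X, ℂ) →ₗ[ℂ] C(X, ℂ)) (hbij : Function.Bijective φ)
    (hdp : DiamPreserving (⇑φ))
    (G' : TwoSet X → TwoSet X) (hG'bij : Function.Bijective G')
    (hG' : ∀ p : TwoSet X, Gset (⇑φ) p.val = {(G' p).val}) :
    ∃ g : X → X, Function.Bijective g ∧
      (∀ (x y : X) (h : x ≠ y),
        (G' ⟨{x, y}, x, y, h, rfl⟩).val = {g x, g y}) ∧
      (∀ (x : X),
        (∀ (y : X) (h : x ≠ y), g x ∈ (G' ⟨{x, y}, x, y, h, rfl⟩).val) ∧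
        ∀ z : X, (∀ (y : X) (h : x ≠ y), z ∈ (G' ⟨{x, y}, x, y, h, rfl⟩).val) →
          z = g x) := by
  classical
  obtain ⟨a, b, c, hab, hac, hbc⟩ := h3
  have hT := fun {x y z : X} (hxy : x ≠ y) (hxz : x ≠ z) (hyz : y ≠ z) =>
    lemmaT φ hbij hdp G' hG'bij.1 hG' hxy hxz hyz
  have hvalinj : ∀ s t : TwoSet X, (G' s).val = (G' t).val → s.val = t.val := by
    intro s t h
    exact congrArg Subtype.val (hG'bij.1 (Subtype.ext h))
  have hthird : ∀ u v : X, ∃ w, w ≠ u ∧ w ≠ v := by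
    intro u v
    by_cases h1 : a ≠ u ∧ a ≠ v
    · exact ⟨a, h1.1, h1.2⟩
    by_cases h2 : b ≠ u ∧ b ≠ v
    · exact ⟨b, h2.1, h2.2⟩
    by_cases h3' : c ≠ u ∧ c ≠ v
    · exact ⟨c, h3'.1, h3'.2⟩
    exfalso
    push_neg at h1 h2 h3'
    have ha' : a = u ∨ a = v := by
      by_cases h : a = u
      · exact Or.inl h
      · exact Or.inr (h1 h)
    have hb' : b = u ∨ b = v := by
      by_cases h : b = u
      · exact Or.inl h
      · exact Or.inr (h2 h)
    have hc' : c = u ∨ c = v := by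
      by_cases h : c = u
      · exact Or.inl h
      · exact Or.inr (h3' h)
    rcases ha' with rfl | rfl <;> rcases hb' with h | h <;> rcases hc' with h' | h' <;>
      first
        | exact hab h.symm
        | exact hac h'.symm
        | exact hbc (h.trans h'.symm)
  have hothers : ∀ x : X, ∃ y z : X, x ≠ y ∧ x ≠ z ∧ y ≠ z := by
    intro x
    obtain ⟨y, hyx, -⟩ := hthird x x
    obtain ⟨z, hzx, hzy⟩ := hthird x y
    exact ⟨y, z, hyx.symm, hzx.symm, hzy.symm⟩
  -- main existence and uniqueness
  have main : ∀ x : X, ∃ v : X,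
      (∀ (y : X) (h : x ≠ y), v ∈ (G' ⟨{x, y}, x, y, h, rfl⟩).val) ∧
      ∀ v' : X, (∀ (y : X) (h : x ≠ y), v' ∈ (G' ⟨{x, y}, x, y, h, rfl⟩).val) →
        v' = v := by
    intro x
    obtain ⟨y₀, z₀, hxy₀, hxz₀, hyz₀⟩ := hothers x
    obtain ⟨P, Q, R, hPQ, hPR, hQR, hA, hB, hC⟩ := hT hxy₀ hxz₀ hyz₀
    refine ⟨P, ?_, ?_⟩
    · intro y hy
      by_cases h1 : y = y₀
      · subst h1
        have h' : (G' ⟨{x, y}, x, y, hy, rfl⟩).val = {P, Q} := hA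
        rw [h']; simp
      by_cases h2 : y = z₀
      · subst h2
        have h' : (G' ⟨{x, y}, x, y, hy, rfl⟩).val = {P, R} := hB
        rw [h']; simp
      -- y is a genuinely new point
      obtain ⟨P', Q', R', hPQ', hPR', hQR', hA', hB', hC'⟩ :=
        hT hxy₀ hy (fun h => h1 (h.symm))
      suffices hPP' : P = P' by
        rw [hB']; rw [hPP']; simp
      by_contra hne
      -- {P,Q} = {P',Q'} so P = Q' and P' = Q
      have hAA' : ({P, Q} : Set X) = {P', Q'} := by rw [← hA, ← hA']
      have hPmem : P ∈ ({P', Q'} : Set X) := hAA' ▸ (by simp)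
      have hP'mem : P' ∈ ({P, Q} : Set X) := hAA' ▸ (by simp)
      have hPQ'' : P = Q' := by
        rcases hPmem with h | h
        · exact absurd h hne
        · exact h
      have hP'Q : P' = Q := by
        rcases hP'mem with h | h
        · exact absurd h.symm hne
        · exact h
      obtain ⟨P'', Q'', R'', hPQ'', hPR'', hQR'', hA'', hB'', hC''⟩ :=
        hT hxz₀ hy (fun h => h2 (h.symm))
      have hBB'' : ({P, R} : Set X) = {P'', Q''} := by rw [← hB, ← hA'']
      have hP''mem : P'' ∈ ({P, R} : Set X) := hBB'' ▸ (by simp)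
      rcases hP''mem with hcase | hcase
      · -- P'' = P : then P ∈ G'{x,y} = {P', R'}, P ≠ P' so P = R'
        have hPinB' : P ∈ ({P', R'} : Set X) := by
          have e : ({P', R'} : Set X) = {P'', R''} := by rw [← hB', ← hB'']
          rw [e, ← hcase]; simp
        have hPR' : P = R' := by
          rcases hPinB' with h | h
          · exact absurd h hne
          · exact h
        -- then G'{x,y} = {P', R'} = {Q, P} = {P, Q} = G'{x,y₀}
        have : (G' ⟨{x, y}, x, y, hy, rfl⟩).val
            = (G' ⟨{x, y₀}, x, y₀, hxy₀, rfl⟩).val := by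
          rw [hB', hA, ← hP'Q, ← hPR']
          exact Set.pair_comm _ _
        have hvals : ({x, y} : Set X) = {x, y₀} := hvalinj _ _ this
        have : y ∈ ({x, y₀} : Set X) := hvals ▸ (by simp)
        rcases this with h | h
        · exact hy h.symm
        · exact h1 h
      · -- P'' = R : then R ∈ G'{x,y} = {P', R'}, R ≠ P' (=Q) so R = R'
        rw [Set.mem_singleton_iff] at hcase
        have hRinB' : R ∈ ({P', R'} : Set X) := by
          have e : ({P', R'} : Set X) = {P'', R''} := by rw [← hB', ← hB'']
          rw [e, ← hcase]; simp
        have hRR' : R = R' := by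
          rcases hRinB' with h | h
          · exact absurd (h.trans hP'Q).symm hQR
          · exact h
        -- then G'{x,y} = {P', R'} = {Q, R} = G'{y₀,z₀}
        have : (G' ⟨{x, y}, x, y, hy, rfl⟩).val
            = (G' ⟨{y₀, z₀}, y₀, z₀, hyz₀, rfl⟩).val := by
          rw [hB', hC, ← hP'Q, ← hRR']
        have hvals : ({x, y} : Set X) = {y₀, z₀} := hvalinj _ _ this
        have : x ∈ ({y₀, z₀} : Set X) := hvals ▸ (by simp)
        rcases this with h | h
        · exact hxy₀ h
        · exact hxz₀ h
    · intro v' hv'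
      have h1 := hv' y₀ hxy₀
      have h2 := hv' z₀ hxz₀
      rw [hA] at h1
      rw [hB] at h2
      rcases h1 with rfl | h1
      · rfl
      rw [Set.mem_singleton_iff] at h1; subst h1
      rcases h2 with h2 | h2
      · exact h2
      · rw [Set.mem_singleton_iff] at h2; exact absurd h2 hQR
  choose g hg1 hg2 using main
  -- symmetric membership
  have hsymmMem : ∀ (x y : X) (h : x ≠ y), g y ∈ (G' ⟨{x, y}, x, y, h, rfl⟩).val := by
    intro x y h
    have := hg1 y x (h.symm)
    have e : (⟨{y, x}, y, x, h.symm, rfl⟩ : TwoSet X) = ⟨{x, y}, x, y, h, rfl⟩ :=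
      Subtype.ext (Set.pair_comm y x)
    rwa [e] at this
  -- injectivity of g (pointwise)
  have hne : ∀ x y : X, x ≠ y → g x ≠ g y := by
    intro x y hxy heq
    obtain ⟨w, hwx, hwy⟩ := hthird x y
    obtain ⟨P, Q, R, hPQ, hPR, hQR, hA, hB, hC⟩ :=
      hT hxy (Ne.symm hwx) (Ne.symm hwy)
    have m1 : g x ∈ ({P, Q} : Set X) := by rw [← hA]; exact hg1 x y hxy
    have m2 : g x ∈ ({P, R} : Set X) := by rw [← hB]; exact hg1 x w (Ne.symm hwx)
    have m3 : g x ∈ ({Q, R} : Set X) := by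
      rw [heq, ← hC]
      exact hg1 y w (Ne.symm hwy)
    rcases m1 with h | h
    · subst h
      rcases m3 with h | h
      · exact hPQ h
      · rw [Set.mem_singleton_iff] at h; exact hPR h
    · rw [Set.mem_singleton_iff] at h; subst h
      rcases m2 with h | h
      · exact hPQ h.symm
      · rw [Set.mem_singleton_iff] at h; exact hQR h
  -- the pair formula
  have hpairs : ∀ (x y : X) (h : x ≠ y),
      (G' ⟨{x, y}, x, y, h, rfl⟩).val = {g x, g y} := by
    intro x y h
    obtain ⟨α, β, hαβ, hval⟩ := (G' ⟨{x, y}, x, y, h, rfl⟩).property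
    rw [hval]
    apply pair_eq_of_mem (hne x y h)
    · rw [← hval]; exact hg1 x y h
    · rw [← hval]; exact hsymmMem x y h
  refine ⟨g, ⟨?_, ?_⟩, hpairs, fun x => ⟨hg1 x, hg2 x⟩⟩
  · intro u v huv
    by_contra hne'
    exact hne u v hne' huv
  · intro v
    obtain ⟨w, hwv, -⟩ := hthird v v
    obtain ⟨s, hs⟩ := hG'bij.2 ⟨{v, w}, v, w, Ne.symm hwv, rfl⟩
    obtain ⟨α, β, hαβ, hsval⟩ := s.property
    have hseq : s = ⟨{α, β}, α, β, hαβ, rfl⟩ := Subtype.ext hsval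
    have := hpairs α β hαβ
    rw [← hseq, hs] at this
    have hv : v ∈ ({g α, g β} : Set X) := by rw [← this]; simp
    rcases hv with h | h
    · exact ⟨α, h.symm⟩
    · rw [Set.mem_singleton_iff] at h; exact ⟨β, h.symm⟩
end

section
/- Let X be a first countable compact Hausdorff topological space with at least three points, let φ : C(X,ℂ) → C(X,ℂ) be a diameter preserving linear bijection, let g : X → X be a bijection, and let τ ∈ ℂ with |τ| = 1 be such that for every x, y ∈ X with x ≠ y, every u ∈ ℂ, and every f ∈ C(X,ℂ): if (x,y,u) ∈ T(f) then (g(x), g(y), τ·u) ∈ T(φ(f)). Then for every f ∈ C(X,ℂ), the function x ↦ φ(f)(g(x)) − τ·f(x) is constant on X. -/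
/-- Core step: for `f` with `f x ≠ f y` the identity holds. -/
theorem diamKeyNe_aux
    {X : Type*} [TopologicalSpace X] [CompactSpace X] [T2Space X]
    (φ : C(X, ℂ) →ₗ[ℂ] C(X, ℂ))
    (g : X → X) (τ : ℂ)
    (hfor : ∀ (x y : X), x ≠ y → ∀ (u : ℂ) (f : C(X, ℂ)),
      (x, y, u) ∈ diamTriple f → (g x, g y, τ * u) ∈ diamTriple (φ f))
    (x y : X) (hxy : x ≠ y) (f : C(X, ℂ)) (hne : f x ≠ f y) :
    φ f (g x) - φ f (g y) = τ * (f x - f y) := by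
  set u : ℂ := f x - f y with hu
  have hu0 : u ≠ 0 := sub_ne_zero.mpr hne
  set r : ℝ := ‖u‖ with hrdef
  have hr : 0 < r := by simpa [hrdef] using (norm_pos_iff.mpr hu0)
  set c : ℂ := u / (r : ℂ) with hcdef
  have hrC : (r : ℂ) ≠ 0 := by exact_mod_cast hr.ne'
  have hcr : c * (r : ℂ) = u := by rw [hcdef]; exact div_mul_cancel₀ u hrC
  have hc1 : ‖c‖ = 1 := by
    rw [hcdef, norm_div, Complex.norm_of_nonneg hr.le, ← hrdef, div_self hr.ne']
  set m : ℂ := (f x + f y) / 2 with hmdef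
  have hxm : f x - m = u / 2 := by rw [hmdef, hu]; ring
  have hym : f y - m = -(u / 2) := by rw [hmdef, hu]; ring
  have habs_half : ‖u / 2‖ = r / 2 := by
    rw [norm_div, hrdef]; norm_num
  obtain ⟨q, hq0, hq1, hq⟩ : ∃ q : C(X, ℝ), q y = 0 ∧ q x = 1 ∧ ∀ z, q z ∈ Set.Icc (0:ℝ) 1 := by
    obtain ⟨q, h0, h1, hq⟩ := exists_continuous_zero_one_of_isClosed (isClosed_singleton (x := y))
      (isClosed_singleton (x := x)) (by simp [hxy.symm])
    exact ⟨q, h0 rfl, h1 rfl, hq⟩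
  set t₀ : ℝ := ‖f‖ + ‖m‖ + 1 with ht₀def
  have ht₀ : 0 < t₀ := by positivity
  have hfm : ∀ z, ‖f z - m‖ ≤ ‖f‖ + ‖m‖ := by
    intro z
    calc ‖f z - m‖ ≤ ‖f z‖ + ‖m‖ := by
          exact norm_sub_le _ _
      _ ≤ ‖f‖ + ‖m‖ := by
          have := f.norm_coe_le_norm z
          linarith
  set E : X → ℝ := fun z => max ((‖f z - m‖ - r / 2) / t₀) 0 with hEdef
  have hEcont : Continuous E := by
    apply Continuous.max _ continuous_const
    exact ((continuous_norm.comp (f.continuous.sub continuous_const)).sub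
      continuous_const).div_const t₀
  have hE0 : ∀ z, 0 ≤ E z := fun z => le_max_right _ _
  have hE1 : ∀ z, E z ≤ 1 := by
    intro z
    apply max_le _ zero_le_one
    rw [div_le_one ht₀]
    have := hfm z
    rw [ht₀def]; linarith
  have hEx : E x = 0 := by
    have : ‖f x - m‖ = r / 2 := by rw [hxm, habs_half]
    simp [hEdef, this]
  have hEy : E y = 0 := by
    have : ‖f y - m‖ = r / 2 := by rw [hym, norm_neg, habs_half]
    simp [hEdef, this]
  set p : X → ℝ := fun z => (2 * q z - 1) * (1 - E z) with hpdef
  have hpcont : Continuous p :=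
    ((continuous_const.mul q.continuous).sub continuous_const).mul
      (continuous_const.sub hEcont)
  have hpx : p x = 1 := by norm_num [hpdef, hq1, hEx]
  have hpy : p y = -1 := by norm_num [hpdef, hq0, hEy]
  have hpbound : ∀ z, |p z| ≤ 1 - E z := by
    intro z
    rw [hpdef, abs_mul]
    have h1 : |2 * q z - 1| ≤ 1 := by
      obtain ⟨ha, hb⟩ := hq z
      rw [abs_le]; constructor <;> linarith
    have h2 : |1 - E z| = 1 - E z := abs_of_nonneg (by linarith [hE1 z])
    rw [h2]
    calc |2 * q z - 1| * (1 - E z) ≤ 1 * (1 - E z) :=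
          mul_le_mul_of_nonneg_right h1 (by linarith [hE1 z])
      _ = 1 - E z := one_mul _
  set P : C(X, ℂ) := ⟨fun z => c * ((p z : ℝ) : ℂ),
    continuous_const.mul (Complex.continuous_ofReal.comp hpcont)⟩ with hPdef
  have hPz : ∀ z, P z = c * ((p z : ℝ) : ℂ) := fun z => rfl
  -- main equation for each t ≥ t₀
  have main : ∀ t : ℝ, t₀ ≤ t →
      τ * (u + 2 * (t : ℂ) * c) =
        (φ f (g x) + (t : ℂ) * φ P (g x)) - (φ f (g y) + (t : ℂ) * φ P (g y)) := by
    intro t ht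
    have htpos : 0 < t := lt_of_lt_of_le ht₀ ht
    set F : C(X, ℂ) := f + (t : ℂ) • P with hFdef
    have hFz : ∀ z, F z = f z + (t : ℂ) * (c * ((p z : ℝ) : ℂ)) := by
      intro z; simp [hFdef, hPz, smul_eq_mul]
    have hFxy : F x - F y = u + 2 * (t : ℂ) * c := by
      rw [hFz, hFz, hpx, hpy, hu]; push_cast; ring
    have habsFxy : ‖F x - F y‖ = r + 2 * t := by
      have : F x - F y = c * (((r + 2 * t : ℝ)) : ℂ) := by
        rw [hFxy, ← hcr]; push_cast; ring
      rw [this, norm_mul, hc1, Complex.norm_real, Real.norm_eq_abs, one_mul, abs_of_pos (by linarith)]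
    have hub : ∀ z, ‖F z - m‖ ≤ t + r / 2 := by
      intro z
      have h1 : F z - m = (f z - m) + (t : ℂ) * (c * ((p z : ℝ) : ℂ)) := by
        rw [hFz]; ring
      have h2 : ‖(t : ℂ) * (c * ((p z : ℝ) : ℂ))‖ = t * |p z| := by
        rw [norm_mul, norm_mul, hc1, Complex.norm_real, Real.norm_eq_abs, Complex.norm_real, Real.norm_eq_abs,
          abs_of_pos htpos, one_mul]
      have h3 : ‖F z - m‖ ≤ ‖f z - m‖ + t * |p z| := by
        rw [h1]
        calc ‖(f z - m) + (t : ℂ) * (c * ((p z : ℝ) : ℂ))‖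
            ≤ ‖f z - m‖ + ‖(t : ℂ) * (c * ((p z : ℝ) : ℂ))‖ :=
              norm_add_le _ _
          _ = ‖f z - m‖ + t * |p z| := by rw [h2]
      have h4 : t * |p z| ≤ t * (1 - E z) :=
        mul_le_mul_of_nonneg_left (hpbound z) htpos.le
      set a : ℝ := ‖f z - m‖ with hadef
      by_cases hcase : a ≤ r / 2
      · have : t * (1 - E z) ≤ t := by
          have := hE0 z
          nlinarith
        linarith
      · push_neg at hcase
        have hEz : E z = (a - r / 2) / t₀ := by
          rw [hEdef]
          exact max_eq_left (le_of_lt (div_pos (by linarith) ht₀))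
        have h5 : a - r / 2 ≤ t * ((a - r / 2) / t₀) := by
          rw [mul_div_assoc', le_div_iff₀ ht₀]
          nlinarith [mul_nonneg (sub_nonneg.mpr ht) (le_of_lt (sub_pos.mpr hcase))]
        rw [hEz] at h4
        have : t * (1 - (a - r / 2) / t₀) = t - t * ((a - r / 2) / t₀) := by ring
        rw [this] at h4
        linarith
    have hdiam : Metric.diam (Set.range ⇑F) = r + 2 * t := by
      apply le_antisymm
      · apply Metric.diam_le_of_forall_dist_le (by linarith)
        rintro _ ⟨z, rfl⟩ _ ⟨w, rfl⟩
        rw [Complex.dist_eq]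
        calc ‖F z - F w‖
            ≤ ‖F z - m‖ + ‖m - F w‖ := by
              have := norm_add_le (F z - m) (m - F w); rwa [sub_add_sub_cancel] at this
          _ ≤ (t + r / 2) + (t + r / 2) :=
              add_le_add (hub z) (by rw [norm_sub_rev]; exact hub w)
          _ = r + 2 * t := by ring
      · have hb : Bornology.IsBounded (Set.range ⇑F) :=
          (isCompact_range F.continuous).isBounded
        have := Metric.dist_le_diam_of_mem hb ⟨x, rfl⟩ ⟨y, rfl⟩
        rw [Complex.dist_eq, habsFxy] at this
        exact this
    have hmem : (x, y, u + 2 * (t : ℂ) * c) ∈ diamTriple F := by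
      constructor
      · show ‖F x - F y‖ = _
        rw [habsFxy, hdiam]
      · exact hFxy.symm
    have hres := hfor x y hxy _ F hmem
    obtain ⟨-, hres2⟩ := hres
    have hφF : φ F = φ f + (t : ℂ) • φ P := by
      rw [hFdef, map_add, map_smul]
    rw [hφF] at hres2
    simpa [smul_eq_mul] using hres2
  have eq1 := main t₀ le_rfl
  have eq2 := main (t₀ + 1) (by linarith)
  push_cast at eq2
  rw [hu]
  linear_combination (t₀ : ℂ) * eq2 - ((t₀ : ℂ) + 1) * eq1


/-- Step 9: for every `f ∈ C(X,ℂ)`, the function `x ↦ φ(f)(g(x)) - τ·f(x)` is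
constant. -/
theorem phi_comp_sub_tau_smul_constant
    {X : Type*} [TopologicalSpace X] [CompactSpace X] [T2Space X]
    [FirstCountableTopology X]
    (h3 : ∃ a b c : X, a ≠ b ∧ a ≠ c ∧ b ≠ c)
    (φ : C(X, ℂ) →ₗ[ℂ] C(X, ℂ)) (hbij : Function.Bijective φ)
    (hdp : DiamPreserving (⇑φ))
    (g : X → X) (hg : Function.Bijective g)
    (τ : ℂ) (hτ : ‖τ‖ = 1)
    (hfor : ∀ (x y : X), x ≠ y → ∀ (u : ℂ) (f : C(X, ℂ)),
      (x, y, u) ∈ diamTriple f → (g x, g y, τ * u) ∈ diamTriple (φ f)) :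
    ∀ f : C(X, ℂ), ∃ c : ℂ, ∀ x : X, φ f (g x) - τ * f x = c := by
  obtain ⟨x₀, b, -, -, -, -⟩ := h3
  have key : ∀ x y : X, x ≠ y → ∀ f : C(X, ℂ),
      φ f (g x) - φ f (g y) = τ * (f x - f y) := by
    intro x y hxy f
    by_cases hne : f x ≠ f y
    · exact diamKeyNe_aux φ g τ hfor x y hxy f hne
    · push_neg at hne
      obtain ⟨q, hq0, hq1, hq⟩ : ∃ q : C(X, ℝ), q y = 0 ∧ q x = 1 ∧
          ∀ z, q z ∈ Set.Icc (0:ℝ) 1 := by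
        obtain ⟨q, h0, h1, hq⟩ := exists_continuous_zero_one_of_isClosed
          (isClosed_singleton (x := y)) (isClosed_singleton (x := x)) (by simp [hxy.symm])
        exact ⟨q, h0 rfl, h1 rfl, hq⟩
      set h : C(X, ℂ) := ⟨fun z => ((q z : ℝ) : ℂ),
        Complex.continuous_ofReal.comp q.continuous⟩ with hhdef
      have hhx : h x = 1 := by simp [hhdef, hq1]
      have hhy : h y = 0 := by simp [hhdef, hq0]
      have h1 : φ (f + h) (g x) - φ (f + h) (g y) = τ * ((f + h) x - (f + h) y) := by
        apply diamKeyNe_aux φ g τ hfor x y hxy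
        simp [hhx, hhy, hne]
      have h2 : φ h (g x) - φ h (g y) = τ * (h x - h y) := by
        apply diamKeyNe_aux φ g τ hfor x y hxy
        simp [hhx, hhy]
      rw [map_add] at h1
      simp only [ContinuousMap.add_apply] at h1
      linear_combination h1 - h2
  intro f
  refine ⟨φ f (g x₀) - τ * f x₀, fun x => ?_⟩
  by_cases hx : x = x₀
  · rw [hx]
  · linear_combination key x x₀ hx f
end
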